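/- arXiv:2309.08634 — 5 statements merged into one kernel-verified Lean document; each statement's English description precedes it below -/
import Mathlib

section
/- Let Θ* ∈ R^{d_a×d_x} be a matrix of rank r. Then for any matrix Δ ∈ R^{d_a×d_x}, ‖Θ*‖_* − ‖Θ* + Δ‖_* ≤ √(2r) ‖Δ‖_F. -/
open MeasureTheory ProbabilityTheory Matrix Finset

noncomputable section

/-- Frobenius norm of a real matrix. -/
def frobNorm {m n : ℕ} (A : Matrix (Fin m) (Fin n) ℝ) : ℝ :=
  Real.sqrt (∑ i, ∑ j, (A i j) ^ 2)

/-- Singular values of a real matrix: square roots of the eigenvalues of `AᵀA`. -/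
def singVals {m n : ℕ} (A : Matrix (Fin m) (Fin n) ℝ) : Fin n → ℝ :=
  fun j => Real.sqrt ((Matrix.isHermitian_conjTranspose_mul_self A).eigenvalues j)

/-- Nuclear norm: sum of the singular values. -/
def nucNorm {m n : ℕ} (A : Matrix (Fin m) (Fin n) ℝ) : ℝ := ∑ j, singVals A j

/-- SVD-style decomposition extracted from the spectral theorem for `BᴴB`. -/
lemma exists_svd_aux {da dx : ℕ} (B : Matrix (Fin da) (Fin dx) ℝ) :
    ∃ (V : Matrix (Fin dx) (Fin dx) ℝ) (P : Matrix (Fin da) (Fin dx) ℝ) (lam : Fin dx → ℝ),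
      Vᵀ * V = 1 ∧ V * Vᵀ = 1 ∧ Pᵀ * P = Matrix.diagonal lam ∧ B = P * Vᵀ ∧
      (∀ j, 0 ≤ lam j) ∧ (∀ j, singVals B j = Real.sqrt (lam j)) ∧
      Fintype.card {j // lam j ≠ 0} = B.rank := by
  have hH := Matrix.isHermitian_conjTranspose_mul_self B
  set V : Matrix (Fin dx) (Fin dx) ℝ := (hH.eigenvectorUnitary : Matrix (Fin dx) (Fin dx) ℝ) with hV
  have hVmem : V ∈ unitary (Matrix (Fin dx) (Fin dx) ℝ) := hH.eigenvectorUnitary.2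
  have hstar : star V = Vᵀ := by
    rw [Matrix.star_eq_conjTranspose, Matrix.conjTranspose_eq_transpose_of_trivial]
  have h1 : Vᵀ * V = 1 := by rw [← hstar]; exact (Unitary.mem_iff.mp hVmem).1
  have h2 : V * Vᵀ = 1 := by rw [← hstar]; exact (Unitary.mem_iff.mp hVmem).2
  have hdiag : star V * (Bᴴ * B) * V = Matrix.diagonal (RCLike.ofReal ∘ hH.eigenvalues) := by
    have := hH.conjStarAlgAut_star_eigenvectorUnitary
    rwa [Unitary.conjStarAlgAut_star_apply] at this
  rw [hstar] at hdiag
  refine ⟨V, B * V, hH.eigenvalues, h1, h2, ?_, ?_, ?_, fun j => rfl, ?_⟩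
  · have : (B * V)ᵀ * (B * V) = Vᵀ * (Bᴴ * B) * V := by
      rw [Matrix.transpose_mul, Matrix.conjTranspose_eq_transpose_of_trivial]
      simp only [Matrix.mul_assoc]
    rw [this, hdiag]
    ext i j
    simp [Matrix.diagonal, Function.comp]
  · rw [Matrix.mul_assoc, h2, Matrix.mul_one]
  · exact fun j => (Matrix.posSemidef_conjTranspose_mul_self B).eigenvalues_nonneg j
  · exact hH.rank_eq_card_non_zero_eigs.symm.trans (Matrix.rank_conjTranspose_mul_self B)

lemma trace_transpose_mul_eq {m n : ℕ} (A B : Matrix (Fin m) (Fin n) ℝ) :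
    (Aᵀ * B).trace = ∑ i, ∑ j, A i j * B i j := by
  simp only [Matrix.trace, Matrix.diag, Matrix.mul_apply, Matrix.transpose_apply]
  exact Finset.sum_comm

lemma mul_transpose_diag_eq {m n : ℕ} (A : Matrix (Fin m) (Fin n) ℝ) (l : Fin m) :
    (A * Aᵀ) l l = ∑ j, A l j ^ 2 := by
  simp [Matrix.mul_apply, sq]

lemma transpose_mul_diag_eq {m n : ℕ} (A : Matrix (Fin m) (Fin n) ℝ) (l : Fin n) :
    (Aᵀ * A) l l = ∑ j, A j l ^ 2 := by
  simp [Matrix.mul_apply, sq]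

lemma trace_mul_le_sum_sqrt {n : ℕ} (M N : Matrix (Fin n) (Fin n) ℝ) (mu : Fin n → ℝ)
    (hM : ∀ l, ∑ j, M l j ^ 2 = 1) (hN : ∀ l, ∑ j, N j l ^ 2 ≤ mu l) :
    (M * N).trace ≤ ∑ l, Real.sqrt (mu l) := by
  refine Finset.sum_le_sum fun l _ => ?_
  have h := Real.sum_mul_le_sqrt_mul_sqrt Finset.univ (fun j => M l j) (fun j => N j l)
  calc (M * N).diag l = ∑ j, M l j * N j l := by simp [Matrix.diag, Matrix.mul_apply]
    _ ≤ Real.sqrt (∑ j, M l j ^ 2) * Real.sqrt (∑ j, N j l ^ 2) := h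
    _ ≤ 1 * Real.sqrt (mu l) := by
        rw [hM l, Real.sqrt_one]
        exact mul_le_mul_of_nonneg_left (Real.sqrt_le_sqrt (hN l)) zero_le_one
    _ = Real.sqrt (mu l) := one_mul _

/-- If `Θ*` has rank `r`, then `‖Θ*‖_* − ‖Θ* + Δ‖_* ≤ √(2r) ‖Δ‖_F`. -/
theorem nucNorm_sub_nucNorm_add_le {da dx r : ℕ}
    (Θstar : Matrix (Fin da) (Fin dx) ℝ) (hrank : Θstar.rank = r)
    (Δ : Matrix (Fin da) (Fin dx) ℝ) :
    nucNorm Θstar - nucNorm (Θstar + Δ) ≤ Real.sqrt (2 * r) * frobNorm Δ := by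
  classical
  obtain ⟨V, P, lam, hVtV, hVVt, hPtP, hB, hlam0, hsv, hcard⟩ := exists_svd_aux Θstar
  obtain ⟨U, Q, mu, hUtU, hUUt, hQtQ, hB', hmu0, hsv', -⟩ := exists_svd_aux (Θstar + Δ)
  set d : Fin dx → ℝ := fun j => if lam j ≠ 0 then (Real.sqrt (lam j))⁻¹ else 0 with hd
  set D : Matrix (Fin dx) (Fin dx) ℝ := Matrix.diagonal d with hD
  have hDt : Dᵀ = D := Matrix.diagonal_transpose d
  set W : Matrix (Fin da) (Fin dx) ℝ := P * D * Vᵀ with hW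
  have hWt : Wᵀ = V * (D * Pᵀ) := by
    rw [hW, Matrix.transpose_mul, Matrix.transpose_mul, Matrix.transpose_transpose, hDt]
  have hlam_sq : ∀ j, Real.sqrt (lam j) * Real.sqrt (lam j) = lam j :=
    fun j => Real.mul_self_sqrt (hlam0 j)
  have hsqrt_ne : ∀ j, lam j ≠ 0 → Real.sqrt (lam j) ≠ 0 := by
    intro j hj
    exact ne_of_gt (Real.sqrt_pos.mpr (lt_of_le_of_ne (hlam0 j) (Ne.symm hj)))
  have hinvlam : ∀ j, lam j ≠ 0 → (Real.sqrt (lam j))⁻¹ * lam j = Real.sqrt (lam j) := by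
    intro j hj
    rw [inv_mul_eq_iff_eq_mul₀ (hsqrt_ne j hj)]
    exact (hlam_sq j).symm
  have hdd_inv : ∀ j, lam j ≠ 0 → d j * d j = (lam j)⁻¹ := by
    intro j hj
    have hdj : d j = (Real.sqrt (lam j))⁻¹ := by simp [hd, hj]
    rw [hdj, ← mul_inv, hlam_sq j]
  -- ⟨W, Θ⟩ = nucNorm Θ
  have hWΘ : (Wᵀ * Θstar).trace = nucNorm Θstar := by
    have h1 : Wᵀ * Θstar = V * (D * Matrix.diagonal lam) * Vᵀ := by
      rw [hWt]
      conv_lhs => rw [hB]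
      rw [← hPtP]
      simp only [Matrix.mul_assoc]
    rw [h1, Matrix.trace_mul_comm, ← Matrix.mul_assoc, ← Matrix.mul_assoc, hVtV, Matrix.one_mul,
      hD, Matrix.diagonal_mul_diagonal, Matrix.trace_diagonal]
    rw [nucNorm]
    refine Finset.sum_congr rfl fun j _ => ?_
    rw [hsv j]
    by_cases hj : lam j = 0
    · simp [hd, hj]
    · have hdj : d j = (Real.sqrt (lam j))⁻¹ := by simp [hd, hj]
      rw [hdj, hinvlam j hj]
  -- ∑∑ W² = r
  have hWW : (Wᵀ * W).trace = (r : ℝ) := by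
    have h1 : Wᵀ * W = V * (D * Matrix.diagonal lam * D) * Vᵀ := by
      rw [hWt]
      conv_lhs => rw [hW]
      rw [show P * D * Vᵀ = P * (D * Vᵀ) from Matrix.mul_assoc _ _ _, ← hPtP]
      simp only [Matrix.mul_assoc]
    rw [h1, Matrix.trace_mul_comm, ← Matrix.mul_assoc, ← Matrix.mul_assoc, hVtV, Matrix.one_mul,
      hD, Matrix.diagonal_mul_diagonal, Matrix.diagonal_mul_diagonal, Matrix.trace_diagonal]
    have hone : ∀ j, d j * lam j * d j = if lam j ≠ 0 then (1 : ℝ) else 0 := by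
      intro j
      by_cases hj : lam j = 0
      · simp [hd, hj]
      · rw [if_pos hj,
          show d j * lam j * d j = lam j * (d j * d j) from by ring,
          hdd_inv j hj, mul_inv_cancel₀ hj]
    simp only [hone]
    rw [Finset.sum_boole]
    have : (Finset.univ.filter fun j => lam j ≠ 0).card = r := by
      rw [← Fintype.card_subtype, hcard, hrank]
    rw [this]
  -- ⟨W, Θ + Δ⟩ ≤ nucNorm (Θ + Δ)
  have hDD : D * D = Matrix.diagonal (fun j => d j * d j) := by
    rw [hD, Matrix.diagonal_mul_diagonal]
  set Pi : Matrix (Fin da) (Fin da) ℝ := P * (D * D) * Pᵀ with hPi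
  have hPis : Piᵀ = Pi := by
    rw [hPi]
    simp only [Matrix.transpose_mul, Matrix.transpose_transpose, hDt, Matrix.mul_assoc]
  have hkey : Matrix.diagonal (fun j => d j * d j) * Matrix.diagonal lam *
      Matrix.diagonal (fun j => d j * d j) = Matrix.diagonal (fun j => d j * d j) := by
    rw [Matrix.diagonal_mul_diagonal, Matrix.diagonal_mul_diagonal]
    have hfun : (fun j => d j * d j * lam j * (d j * d j)) = fun j => d j * d j := by
      funext j
      by_cases hj : lam j = 0
      · have : d j = 0 := by simp [hd, hj]
        rw [this]
        ring
      · rw [show d j * d j * lam j * (d j * d j) = lam j * (d j * d j) * (d j * d j) from by ring,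
          hdd_inv j hj, mul_inv_cancel₀ hj, one_mul]
    rw [hfun]
  have hPi2 : Pi * Pi = Pi := by
    rw [hPi, hDD]
    calc P * Matrix.diagonal (fun j => d j * d j) * Pᵀ *
          (P * Matrix.diagonal (fun j => d j * d j) * Pᵀ)
        = P * (Matrix.diagonal (fun j => d j * d j) * (Pᵀ * P) *
            Matrix.diagonal (fun j => d j * d j)) * Pᵀ := by
          simp only [Matrix.mul_assoc]
      _ = P * Matrix.diagonal (fun j => d j * d j) * Pᵀ := by
          rw [hPtP, hkey, Matrix.mul_assoc]
  have hWB : (Wᵀ * (Θstar + Δ)).trace ≤ nucNorm (Θstar + Δ) := by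
    have h1 : (Wᵀ * (Θstar + Δ)).trace = ((Uᵀ * V) * (D * Pᵀ * Q)).trace := by
      conv_lhs => rw [hWt, hB']
      rw [show V * (D * Pᵀ) * (Q * Uᵀ) = (V * (D * Pᵀ * Q)) * Uᵀ by
        simp only [Matrix.mul_assoc]]
      rw [Matrix.trace_mul_comm]
      simp only [Matrix.mul_assoc]
    have hM : ∀ l, ∑ j, (Uᵀ * V) l j ^ 2 = 1 := by
      intro l
      rw [← mul_transpose_diag_eq]
      have e : (Uᵀ * V) * (Uᵀ * V)ᵀ = 1 := by
        rw [Matrix.transpose_mul, Matrix.transpose_transpose,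
          show Uᵀ * V * (Vᵀ * U) = Uᵀ * (V * Vᵀ) * U by simp only [Matrix.mul_assoc],
          hVVt, Matrix.mul_one, hUtU]
      rw [e, Matrix.one_apply_eq]
    have hN : ∀ l, ∑ j, (D * Pᵀ * Q) j l ^ 2 ≤ mu l := by
      intro l
      rw [← transpose_mul_diag_eq]
      have hNt : (D * Pᵀ * Q)ᵀ * (D * Pᵀ * Q) = Qᵀ * (Pi * Q) := by
        rw [hPi]
        simp only [Matrix.transpose_mul, Matrix.transpose_transpose, hDt, Matrix.mul_assoc]
      set R : Matrix (Fin da) (Fin dx) ℝ := Q - Pi * Q with hR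
      have e2 : (Pi * Q)ᵀ * Q = Qᵀ * (Pi * Q) := by
        rw [Matrix.transpose_mul, hPis, Matrix.mul_assoc]
      have e3 : (Pi * Q)ᵀ * (Pi * Q) = Qᵀ * (Pi * Q) := by
        rw [Matrix.transpose_mul, hPis, Matrix.mul_assoc, ← Matrix.mul_assoc Pi Pi Q, hPi2]
      have key : Rᵀ * R = Qᵀ * Q - Qᵀ * (Pi * Q) := by
        rw [hR, Matrix.transpose_sub, Matrix.sub_mul, Matrix.mul_sub, Matrix.mul_sub, e2, e3]
        abel
      have hRnn : 0 ≤ ∑ i, R i l ^ 2 := Finset.sum_nonneg fun i _ => sq_nonneg _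
      have hQQ : (Qᵀ * Q) l l = mu l := by rw [hQtQ, Matrix.diagonal_apply_eq]
      have : (Qᵀ * (Pi * Q)) l l = (Qᵀ * Q) l l - (Rᵀ * R) l l := by
        rw [key, Matrix.sub_apply]
        ring
      rw [hNt, this, hQQ, transpose_mul_diag_eq]
      linarith
    calc (Wᵀ * (Θstar + Δ)).trace = ((Uᵀ * V) * (D * Pᵀ * Q)).trace := h1
      _ ≤ ∑ l, Real.sqrt (mu l) := trace_mul_le_sum_sqrt _ _ _ hM hN
      _ = nucNorm (Θstar + Δ) := by
          rw [nucNorm]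
          exact (Finset.sum_congr rfl fun l _ => (hsv' l).symm)
  -- Cauchy–Schwarz: -⟨W, Δ⟩ ≤ √r ‖Δ‖_F
  have hfrob : frobNorm Δ = Real.sqrt (∑ p : Fin da × Fin dx, Δ p.1 p.2 ^ 2) := by
    rw [frobNorm]
    congr 1
    exact (Fintype.sum_prod_type' _).symm
  have hWpair : ∑ p : Fin da × Fin dx, W p.1 p.2 ^ 2 = (r : ℝ) := by
    rw [← hWW, trace_transpose_mul_eq, ← Fintype.sum_prod_type']
    exact Finset.sum_congr rfl fun p _ => pow_two _
  have hCS : -(Wᵀ * Δ).trace ≤ Real.sqrt r * frobNorm Δ := by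
    have h := Real.sum_mul_le_sqrt_mul_sqrt Finset.univ
      (fun p : Fin da × Fin dx => -W p.1 p.2) (fun p : Fin da × Fin dx => Δ p.1 p.2)
    have h1 : ∑ p : Fin da × Fin dx, -W p.1 p.2 * Δ p.1 p.2 = -(Wᵀ * Δ).trace := by
      rw [trace_transpose_mul_eq, ← Fintype.sum_prod_type', ← Finset.sum_neg_distrib]
      exact Finset.sum_congr rfl fun p _ => by ring
    have h2 : ∑ p : Fin da × Fin dx, (-W p.1 p.2) ^ 2 = (r : ℝ) := by
      rw [← hWpair]
      exact Finset.sum_congr rfl fun p _ => by ring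
    rw [h1, h2] at h
    rw [hfrob]
    exact h
  -- put the pieces together
  have hsplit : (Wᵀ * (Θstar + Δ)).trace = (Wᵀ * Θstar).trace + (Wᵀ * Δ).trace := by
    rw [Matrix.mul_add, Matrix.trace_add]
  have hsqr : Real.sqrt r * frobNorm Δ ≤ Real.sqrt (2 * r) * frobNorm Δ := by
    refine mul_le_mul_of_nonneg_right (Real.sqrt_le_sqrt ?_) (Real.sqrt_nonneg _)
    have : (0 : ℝ) ≤ r := Nat.cast_nonneg r
    linarith
  linarith [hWB, hsplit, hCS, hWΘ, hsqr]

end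
end

section
/- Let Θ* ∈ R^{d_a×d_x} have rank r with singular value decomposition Θ* = U S Vᵀ, where U ∈ R^{d_a×r} and V ∈ R^{d_x×r} have orthonormal columns, and let U_⊥ ∈ R^{d_a×(d_a−r)} and V_⊥ ∈ R^{d_x×(d_x−r)} complete U and V to orthonormal bases. For any Δ ∈ R^{d_a×d_x}, set Δ_⊥ = U_⊥ U_⊥ᵀ Δ V_⊥ V_⊥ᵀ. Then the matrix Δ − Δ_⊥ has rank at most 2r. -/
open MeasureTheory ProbabilityTheory Matrix Finset

noncomputable section

lemma my_rank_add_le {m n : Type*} [Fintype m] [Fintype n] [DecidableEq n]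
    (A B : Matrix m n ℝ) : (A + B).rank ≤ A.rank + B.rank := by
  simp only [Matrix.rank]
  have h : LinearMap.range (A + B).mulVecLin ≤
      LinearMap.range A.mulVecLin ⊔ LinearMap.range B.mulVecLin := by
    rintro x ⟨v, rfl⟩
    exact Submodule.mem_sup.2 ⟨A.mulVecLin v, ⟨v, rfl⟩, B.mulVecLin v, ⟨v, rfl⟩, by
      simp [Matrix.add_mulVec]⟩
  exact (Submodule.finrank_mono h).trans
    (Submodule.finrank_add_le_finrank_add_finrank _ _)

/-- with `Θ* = U S Vᵀ` a rank-`r` SVD and `Δ_⊥ = U_⊥U_⊥ᵀ Δ V_⊥V_⊥ᵀ`,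
the matrix `Δ − Δ_⊥` has rank at most `2r`. -/
theorem rank_sub_perp_le {da dx r : ℕ}
    (Θstar : Matrix (Fin da) (Fin dx) ℝ) (hrank : Θstar.rank = r)
    (U : Matrix (Fin da) (Fin r) ℝ) (V : Matrix (Fin dx) (Fin r) ℝ)
    (s : Fin r → ℝ) (hs : ∀ i, 0 < s i)
    (hUorth : Uᵀ * U = 1) (hVorth : Vᵀ * V = 1)
    (hsvd : Θstar = U * Matrix.diagonal s * Vᵀ)
    (Uperp : Matrix (Fin da) (Fin (da - r)) ℝ)
    (Vperp : Matrix (Fin dx) (Fin (dx - r)) ℝ)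
    (hUperp : Uperpᵀ * Uperp = 1) (hVperp : Vperpᵀ * Vperp = 1)
    (hUmix : Uᵀ * Uperp = 0) (hVmix : Vᵀ * Vperp = 0)
    (hUcomp : U * Uᵀ + Uperp * Uperpᵀ = 1)
    (hVcomp : V * Vᵀ + Vperp * Vperpᵀ = 1)
    (Δ : Matrix (Fin da) (Fin dx) ℝ) :
    (Δ - Uperp * Uperpᵀ * Δ * (Vperp * Vperpᵀ)).rank ≤ 2 * r := by
  have hU : Uperp * Uperpᵀ = 1 - U * Uᵀ := by
    rw [← hUcomp]; abel
  have hV : Vperp * Vperpᵀ = 1 - V * Vᵀ := by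
    rw [← hVcomp]; abel
  have key : Δ - Uperp * Uperpᵀ * Δ * (Vperp * Vperpᵀ) =
      U * (Uᵀ * Δ) + ((Δ - U * (Uᵀ * Δ)) * V) * Vᵀ := by
    rw [hU, hV, ← Matrix.mul_assoc]
    simp only [Matrix.sub_mul, Matrix.mul_sub, Matrix.one_mul, Matrix.mul_one,
      Matrix.mul_assoc]
    abel
  rw [key, two_mul]
  refine (my_rank_add_le _ _).trans (add_le_add ?_ ?_)
  · exact (Matrix.rank_mul_le_left _ _).trans
      ((Matrix.rank_le_card_width U).trans (by simp))
  · exact (Matrix.rank_mul_le_right _ _).trans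
      ((Matrix.rank_le_card_height Vᵀ).trans (by simp))
end
end

section
/- Let Θ* ∈ R^{d_a×d_x} have rank r with singular value decomposition Θ* = U S Vᵀ, where U ∈ R^{d_a×r} and V ∈ R^{d_x×r} have orthonormal columns, and let U_⊥ ∈ R^{d_a×(d_a−r)} and V_⊥ ∈ R^{d_x×(d_x−r)} complete U and V to orthonormal bases. For any Δ ∈ R^{d_a×d_x}, set Δ_⊥ = U_⊥ U_⊥ᵀ Δ V_⊥ V_⊥ᵀ. Then the nuclear norm is additive on this pair: ‖Θ* + Δ_⊥‖_* = ‖Θ*‖_* + ‖Δ_⊥‖_*. -/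
open MeasureTheory ProbabilityTheory Matrix Finset

noncomputable section

section Aux

open Polynomial

/-- characteristic polynomial is invariant under orthogonal conjugation -/
lemma charpoly_orth_conj {n : ℕ} (O M : Matrix (Fin n) (Fin n) ℝ) (hO : Oᵀ * O = 1) :
    (O * M * Oᵀ).charpoly = M.charpoly := by
  have hO' : O * Oᵀ = 1 := mul_eq_one_comm.mp hO
  have hmap : ∀ (A B : Matrix (Fin n) (Fin n) ℝ),
      (A * B).map (C : ℝ → ℝ[X]) = A.map C * B.map C := fun A B =>
    Matrix.map_mul
  have hchar : charmatrix (O * M * Oᵀ) = O.map C * charmatrix M * (Oᵀ).map C := by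
    rw [charmatrix, charmatrix]
    simp only [RingHom.mapMatrix_apply]
    rw [mul_sub, sub_mul]
    congr 1
    · -- scalar part
      have hc : O.map C * Matrix.scalar (Fin n) X = Matrix.scalar (Fin n) X * O.map C :=
        (Matrix.scalar_commute (X : ℝ[X]) (fun r' => Commute.all _ _) (O.map C)).symm
      rw [hc, mul_assoc, ← hmap, hO', Matrix.map_one _ (map_zero C) (map_one C), mul_one]
    · rw [← hmap, ← hmap]
  unfold Matrix.charpoly
  rw [hchar, det_mul, det_mul, mul_comm, ← mul_assoc, ← det_mul, ← hmap, hO,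
    Matrix.map_one _ (map_zero C) (map_one C), det_one, one_mul]

lemma charpoly_diag {n : ℕ} (d : Fin n → ℝ) :
    (Matrix.diagonal d).charpoly = ∏ i, (X - C (d i)) := by
  rw [Matrix.charpoly_of_upperTriangular _ (Matrix.blockTriangular_diagonal d)]
  simp

/-- real spectral theorem, orthogonal form -/
lemma real_spectral {n : ℕ} {H : Matrix (Fin n) (Fin n) ℝ} (hH : H.IsHermitian) :
    ∃ Q : Matrix (Fin n) (Fin n) ℝ, Qᵀ * Q = 1 ∧
      H = Q * Matrix.diagonal hH.eigenvalues * Qᵀ := by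
  refine ⟨(hH.eigenvectorUnitary : Matrix (Fin n) (Fin n) ℝ), ?_, ?_⟩
  · have h := Matrix.mem_unitaryGroup_iff'.mp (hH.eigenvectorUnitary).2
    rwa [Matrix.star_eq_conjTranspose, Matrix.conjTranspose_eq_transpose_of_trivial] at h
  · have h := hH.spectral_theorem
    rwa [Unitary.conjStarAlgAut_apply, Matrix.star_eq_conjTranspose,
      Matrix.conjTranspose_eq_transpose_of_trivial, RCLike.ofReal_real_eq_id, Function.id_comp] at h

/-- eigenvalue multiset from an orthogonal diagonalization -/
lemma eig_multiset {n : ℕ} {H : Matrix (Fin n) (Fin n) ℝ} (hH : H.IsHermitian)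
    (O : Matrix (Fin n) (Fin n) ℝ) (d : Fin n → ℝ) (hO : Oᵀ * O = 1)
    (hdiag : H = O * Matrix.diagonal d * Oᵀ) :
    Multiset.map hH.eigenvalues Finset.univ.val = Multiset.map d Finset.univ.val := by
  have h1 : H.charpoly = ∏ i, (X - C (d i)) := by
    rw [hdiag, charpoly_orth_conj _ _ hO, charpoly_diag]
  have h2 : H.charpoly = ∏ i, (X - C (hH.eigenvalues i)) := by
    obtain ⟨Q, hQ, hspec⟩ := real_spectral hH
    conv_lhs => rw [hspec]
    rw [charpoly_orth_conj _ _ hQ, charpoly_diag]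
  have key : (∏ i, (X - C (hH.eigenvalues i))) = ∏ i, (X - C (d i)) := by rw [← h1, ← h2]
  have r1 := Polynomial.roots_multiset_prod_X_sub_C
    (Multiset.map hH.eigenvalues Finset.univ.val)
  have r2 := Polynomial.roots_multiset_prod_X_sub_C (Multiset.map d Finset.univ.val)
  rw [Multiset.map_map] at r1 r2
  have e1 : ((Multiset.map (fun a => X - C a) (Multiset.map hH.eigenvalues Finset.univ.val)).prod :
      ℝ[X]) = ∏ i, (X - C (hH.eigenvalues i)) := by
    rw [Multiset.map_map]; rfl
  have e2 : ((Multiset.map (fun a => X - C a) (Multiset.map d Finset.univ.val)).prod :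
      ℝ[X]) = ∏ i, (X - C (d i)) := by
    rw [Multiset.map_map]; rfl
  calc Multiset.map hH.eigenvalues Finset.univ.val
      = ((Multiset.map (fun a => X - C a)
          (Multiset.map hH.eigenvalues Finset.univ.val)).prod).roots := by
        rw [Polynomial.roots_multiset_prod_X_sub_C]
    _ = ((Multiset.map (fun a => X - C a) (Multiset.map d Finset.univ.val)).prod).roots := by
        rw [e1, e2, key]
    _ = Multiset.map d Finset.univ.val := Polynomial.roots_multiset_prod_X_sub_C _

/-- nuclear norm from an orthogonal diagonalization of `AᵀA` -/
lemma nucNorm_eq_of_diag {m n : ℕ} (A : Matrix (Fin m) (Fin n) ℝ)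
    (O : Matrix (Fin n) (Fin n) ℝ) (d : Fin n → ℝ) (hO : Oᵀ * O = 1)
    (h : Aᵀ * A = O * Matrix.diagonal d * Oᵀ) :
    nucNorm A = ∑ i, Real.sqrt (d i) := by
  have hmult := eig_multiset (Matrix.isHermitian_conjTranspose_mul_self A) O d hO
    (by rwa [Matrix.conjTranspose_eq_transpose_of_trivial])
  unfold nucNorm singVals
  calc (∑ j, Real.sqrt ((Matrix.isHermitian_conjTranspose_mul_self A).eigenvalues j))
      = ((Multiset.map (Matrix.isHermitian_conjTranspose_mul_self A).eigenvalues
          Finset.univ.val).map Real.sqrt).sum := by rw [Multiset.map_map]; rfl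
    _ = ((Multiset.map d Finset.univ.val).map Real.sqrt).sum := by rw [hmult]
    _ = ∑ i, Real.sqrt (d i) := by rw [Multiset.map_map]; rfl

/-- conjugating a `Sum.elim` diagonal by a `fromColumns` matrix -/
lemma conj_sum_diag {m n₁ n₂ : Type*} [Fintype m] [Fintype n₁] [Fintype n₂]
    [DecidableEq n₁] [DecidableEq n₂]
    (A : Matrix m n₁ ℝ) (B : Matrix m n₂ ℝ) (f : n₁ → ℝ) (g : n₂ → ℝ) :
    Matrix.fromCols A B * Matrix.diagonal (Sum.elim f g) * (Matrix.fromCols A B)ᵀ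
      = A * Matrix.diagonal f * Aᵀ + B * Matrix.diagonal g * Bᵀ := by
  rw [← Matrix.fromBlocks_diagonal, Matrix.fromCols_mul_fromBlocks,
    Matrix.transpose_fromCols, Matrix.fromCols_mul_fromRows]
  simp

/-- reindexing the columns of the conjugating matrix by an equivalence -/
lemma conj_submatrix {dx : ℕ} {κ : Type*} [Fintype κ] [DecidableEq κ] (e : κ ≃ Fin dx)
    (F : Matrix (Fin dx) κ ℝ) (d : κ → ℝ) :
    (F.submatrix id ⇑e.symm) * Matrix.diagonal (d ∘ ⇑e.symm) * (F.submatrix id ⇑e.symm)ᵀ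
      = F * Matrix.diagonal d * Fᵀ := by
  rw [← Matrix.submatrix_diagonal_equiv d e.symm,
    ← Matrix.submatrix_mul _ _ id ⇑e.symm ⇑e.symm e.symm.bijective,
    Matrix.transpose_submatrix,
    ← Matrix.submatrix_mul _ _ id ⇑e.symm id e.symm.bijective,
    Matrix.submatrix_id_id]

lemma orth_submatrix {dx : ℕ} {κ : Type*} [Fintype κ] [DecidableEq κ] (e : κ ≃ Fin dx)
    (F : Matrix (Fin dx) κ ℝ) (hF : Fᵀ * F = 1) :
    (F.submatrix id ⇑e.symm)ᵀ * (F.submatrix id ⇑e.symm) = 1 := by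
  rw [Matrix.transpose_submatrix,
    ← Matrix.submatrix_mul _ _ ⇑e.symm id ⇑e.symm (Function.bijective_id), hF,
    Matrix.submatrix_one _ e.symm.injective]

end Aux

/-- with `Θ* = U S Vᵀ` a rank-`r` SVD and `Δ_⊥ = U_⊥U_⊥ᵀ Δ V_⊥V_⊥ᵀ`,
the nuclear norm is additive: `‖Θ* + Δ_⊥‖_* = ‖Θ*‖_* + ‖Δ_⊥‖_*`. -/
theorem nucNorm_add_perp {da dx r : ℕ}
    (Θstar : Matrix (Fin da) (Fin dx) ℝ) (hrank : Θstar.rank = r)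
    (U : Matrix (Fin da) (Fin r) ℝ) (V : Matrix (Fin dx) (Fin r) ℝ)
    (s : Fin r → ℝ) (hs : ∀ i, 0 < s i)
    (hUorth : Uᵀ * U = 1) (hVorth : Vᵀ * V = 1)
    (hsvd : Θstar = U * Matrix.diagonal s * Vᵀ)
    (Uperp : Matrix (Fin da) (Fin (da - r)) ℝ)
    (Vperp : Matrix (Fin dx) (Fin (dx - r)) ℝ)
    (hUperp : Uperpᵀ * Uperp = 1) (hVperp : Vperpᵀ * Vperp = 1)
    (hUmix : Uᵀ * Uperp = 0) (hVmix : Vᵀ * Vperp = 0)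
    (hUcomp : U * Uᵀ + Uperp * Uperpᵀ = 1)
    (hVcomp : V * Vᵀ + Vperp * Vperpᵀ = 1)
    (Δ : Matrix (Fin da) (Fin dx) ℝ) :
    nucNorm (Θstar + Uperp * Uperpᵀ * Δ * (Vperp * Vperpᵀ))
      = nucNorm Θstar + nucNorm (Uperp * Uperpᵀ * Δ * (Vperp * Vperpᵀ)) := by
  -- rank bound gives `r ≤ dx`
  have hr : r ≤ dx := by
    have h := Θstar.rank_le_card_width
    rw [hrank, Fintype.card_fin] at h
    exact h
  set B : Matrix (Fin da) (Fin dx) ℝ := Uperp * Uperpᵀ * Δ * (Vperp * Vperpᵀ) with hBdef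
  set K : Matrix (Fin (da - r)) (Fin (dx - r)) ℝ := Uperpᵀ * Δ * Vperp with hKdef
  have hKh : (Kᵀ * K).IsHermitian := by
    simpa [Matrix.conjTranspose_eq_transpose_of_trivial] using
      Matrix.isHermitian_conjTranspose_mul_self K
  obtain ⟨Q, hQ, hKspec⟩ := real_spectral hKh
  set t : Fin (dx - r) → ℝ := hKh.eigenvalues with htdef
  have hBf : B = Uperp * K * Vperpᵀ := by
    simp [hBdef, hKdef, Matrix.mul_assoc]
  -- transposed mixed products
  have hVmix' : Vperpᵀ * V = 0 := by
    have h := congrArg Matrix.transpose hVmix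
    simpa using h
  have hUmix' : Uperpᵀ * U = 0 := by
    have h := congrArg Matrix.transpose hUmix
    simpa using h
  -- the combined orthogonal family
  set F : Matrix (Fin dx) (Fin r ⊕ Fin (dx - r)) ℝ := Matrix.fromCols V (Vperp * Q) with hFdef
  have hF : Fᵀ * F = 1 := by
    rw [hFdef, Matrix.transpose_fromCols, Matrix.fromRows_mul_fromCols]
    have h1 : Vᵀ * (Vperp * Q) = 0 := by rw [← Matrix.mul_assoc, hVmix, Matrix.zero_mul]
    have h2 : (Vperp * Q)ᵀ * V = 0 := by
      rw [Matrix.transpose_mul, Matrix.mul_assoc, hVmix', Matrix.mul_zero]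
    have h3 : (Vperp * Q)ᵀ * (Vperp * Q) = 1 := by
      rw [Matrix.transpose_mul, Matrix.mul_assoc, ← Matrix.mul_assoc Vperpᵀ, hVperp,
        Matrix.one_mul, hQ]
    rw [hVorth, h1, h2, h3, Matrix.fromBlocks_one]
  -- Gram matrices
  have hΘ : Θstarᵀ * Θstar = V * Matrix.diagonal (fun i => s i * s i) * Vᵀ := by
    rw [hsvd]
    simp only [Matrix.transpose_mul, Matrix.diagonal_transpose, Matrix.transpose_transpose,
      Matrix.mul_assoc]
    rw [← Matrix.mul_assoc Uᵀ U, hUorth, Matrix.one_mul,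
      ← Matrix.mul_assoc (Matrix.diagonal s), Matrix.diagonal_mul_diagonal]
  have hBB : Bᵀ * B = (Vperp * Q) * Matrix.diagonal t * (Vperp * Q)ᵀ := by
    rw [hBf]
    simp only [Matrix.transpose_mul, Matrix.transpose_transpose, Matrix.mul_assoc]
    rw [← Matrix.mul_assoc Uperpᵀ Uperp, hUperp, Matrix.one_mul, ← Matrix.mul_assoc Kᵀ K, hKspec]
    simp only [Matrix.mul_assoc]
  have hcross1 : Θstarᵀ * B = 0 := by
    rw [hsvd, hBf]
    simp only [Matrix.transpose_mul, Matrix.diagonal_transpose, Matrix.transpose_transpose,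
      Matrix.mul_assoc]
    rw [← Matrix.mul_assoc Uᵀ Uperp, hUmix]
    simp
  have hcross2 : Bᵀ * Θstar = 0 := by
    rw [hsvd, hBf]
    simp only [Matrix.transpose_mul, Matrix.transpose_transpose, Matrix.mul_assoc]
    rw [← Matrix.mul_assoc Uperpᵀ U, hUmix']
    simp
  have hMM : (Θstar + B)ᵀ * (Θstar + B) = Θstarᵀ * Θstar + Bᵀ * B := by
    rw [Matrix.transpose_add, Matrix.add_mul, Matrix.mul_add, Matrix.mul_add, hcross1, hcross2]
    abel
  -- expressed via F
  have hdiag1 : Θstarᵀ * Θstar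
      = F * Matrix.diagonal (Sum.elim (fun i => s i * s i) (fun _ : Fin (dx - r) => (0:ℝ))) * Fᵀ := by
    rw [hFdef, conj_sum_diag, hΘ]
    simp
  have hdiag2 : Bᵀ * B
      = F * Matrix.diagonal (Sum.elim (fun _ : Fin r => (0:ℝ)) t) * Fᵀ := by
    rw [hFdef, conj_sum_diag, hBB]
    simp
  have hdiag3 : (Θstar + B)ᵀ * (Θstar + B)
      = F * Matrix.diagonal (Sum.elim (fun i => s i * s i) t) * Fᵀ := by
    rw [hFdef, conj_sum_diag, hMM, hΘ, hBB]
  -- reindex by an equivalence to `Fin dx`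
  have hcard : r + (dx - r) = dx := by omega
  set e : (Fin r ⊕ Fin (dx - r)) ≃ Fin dx := finSumFinEquiv.trans (finCongr hcard) with hedef
  set O : Matrix (Fin dx) (Fin dx) ℝ := F.submatrix id ⇑e.symm with hOdef
  have hO : Oᵀ * O = 1 := orth_submatrix e F hF
  have key : ∀ (A : Matrix (Fin da) (Fin dx) ℝ) (d : Fin r ⊕ Fin (dx - r) → ℝ),
      Aᵀ * A = F * Matrix.diagonal d * Fᵀ →
      nucNorm A = (∑ i, Real.sqrt (d (Sum.inl i))) + ∑ j, Real.sqrt (d (Sum.inr j)) := by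
    intro A d hA
    have h : Aᵀ * A = O * Matrix.diagonal (d ∘ ⇑e.symm) * Oᵀ := by
      rw [hOdef, conj_submatrix e F d, hA]
    rw [nucNorm_eq_of_diag A O (d ∘ ⇑e.symm) hO h]
    rw [show (∑ i, Real.sqrt ((d ∘ ⇑e.symm) i)) = ∑ k, Real.sqrt (d k) from
      Equiv.sum_comp e.symm (fun k => Real.sqrt (d k)), Fintype.sum_sum_type]
  have h1 := key Θstar _ hdiag1
  have h2 := key B _ hdiag2
  have h3 := key (Θstar + B) _ hdiag3
  simp only [Sum.elim_inl, Sum.elim_inr] at h1 h2 h3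
  rw [h1, h2, h3]
  have hsq : ∀ i, Real.sqrt (s i * s i) = s i := fun i => Real.sqrt_mul_self (hs i).le
  simp [hsq]

end
end

section
/- Let (F_t)_{t=1}^{T} be a filtration on a probability space with T ≥ 2, and let B > 0. For each t = 2, …, T, let a_t ∈ R^m be an F_{t−1}-measurable random vector with ‖a_t‖₂ = 1 almost surely, let x_t ∈ R^n be a random vector with ‖x_t‖₂² ≤ B almost surely, and let ε_t be a real random variable, with x_t, ε_t both F_t-measurable, such that conditionally on the σ-algebra generated by F_{t−1} and x_t, the variable ε_t has the standard normal distribution N(0,1). Define the random matrix W_T = Σ_{t=2}^{T} ε_t x_t a_tᵀ ∈ R^{n×m}. Then E[ exp( ‖W_T‖_F² / (2TB) ) ] ≤ T. -/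
open MeasureTheory ProbabilityTheory Finset

noncomputable section

lemma gauss_exp_quad (α β : ℝ) (hβ : β < 1/2) :
    ∫⁻ e, ENNReal.ofReal (Real.exp (α*e + β*e^2)) ∂(gaussianReal 0 1)
      = ENNReal.ofReal (Real.sqrt (1-2*β)⁻¹ * Real.exp (α^2 * (1-2*β)⁻¹ / 2)) := by
  have hv0 : (0:ℝ) < 1 - 2*β := by linarith
  set v : ℝ := (1-2*β)⁻¹ with hv
  have hvpos : 0 < v := inv_pos.mpr hv0
  rw [gaussianReal_of_var_ne_zero _ one_ne_zero,
    lintegral_withDensity_eq_lintegral_mul _ (measurable_gaussianPDF 0 1)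
      (by fun_prop : Measurable fun e : ℝ => ENNReal.ofReal (Real.exp (α*e + β*e^2)))]
  have key : ∀ e : ℝ, (gaussianPDF 0 1 * fun e => ENNReal.ofReal (Real.exp (α*e + β*e^2))) e
      = ENNReal.ofReal (Real.sqrt v * Real.exp (α^2 * v / 2)) * gaussianPDF (α*v) v.toNNReal e := by
    intro e
    simp only [Pi.mul_apply, gaussianPDF]
    rw [← ENNReal.ofReal_mul (gaussianPDFReal_nonneg _ _ _),
      ← ENNReal.ofReal_mul (by positivity)]
    congr 1
    simp only [gaussianPDFReal, NNReal.coe_mk, NNReal.coe_one, Real.coe_toNNReal _ hvpos.le]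
    have h1 : Real.sqrt v ≠ 0 := by positivity
    have h2 : Real.sqrt (2*Real.pi) ≠ 0 := by positivity
    have hcoef : Real.sqrt v * (Real.sqrt (2*Real.pi*v))⁻¹ = (Real.sqrt (2*Real.pi*1))⁻¹ := by
      rw [show (2*Real.pi*v) = (2*Real.pi)*v by ring, Real.sqrt_mul (by positivity), mul_one]
      field_simp
    rw [mul_assoc, ← Real.exp_add,
      show Real.sqrt v * Real.exp (α^2*v/2) * ((Real.sqrt (2*Real.pi*v))⁻¹ * Real.exp (-(e-α*v)^2/(2*v)))
        = (Real.sqrt v * (Real.sqrt (2*Real.pi*v))⁻¹) * Real.exp (α^2*v/2 + -(e-α*v)^2/(2*v)) by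
          rw [Real.exp_add]; ring, hcoef]
    congr 1
    congr 1
    have hvne : v ≠ 0 := ne_of_gt hvpos
    have hvu : v * (1-2*β) = 1 := by rw [hv]; field_simp
    field_simp
    linear_combination (-e^2) * hvu
  rw [lintegral_congr key, lintegral_const_mul _ (measurable_gaussianPDF _ _),
    lintegral_gaussianPDF_eq_one _
      (by intro h; rw [NNReal.eq_iff] at h; simp only [NNReal.coe_mk, NNReal.coe_zero, Real.coe_toNNReal _ hvpos.le] at h;
          exact ne_of_gt hvpos h), mul_one]

lemma my_indep_mono {Ω : Type*} {mΩ : MeasurableSpace Ω} {μ : Measure Ω}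
    {m₁ m₂ m₁' m₂' : MeasurableSpace Ω} (h : Indep m₁' m₂' μ) (h1 : m₁ ≤ m₁') (h2 : m₂ ≤ m₂') :
    Indep m₁ m₂ μ :=
  fun t1 t2 ht1 ht2 => h t1 t2 (h1 _ ht1) (h2 _ ht2)

lemma step_real_bound (t B N' C D : ℝ) (ht : 1 ≤ t) (hB : 0 < B) (hN' : 0 ≤ N')
    (hD0 : 0 ≤ D) (hDB : D ≤ B) (hCS : C^2 ≤ N' * D) :
    Real.exp (N'/(2*(t+1)*B)) *
      (Real.sqrt (1-2*(D/(2*(t+1)*B)))⁻¹ * Real.exp ((C/((t+1)*B))^2 * (1-2*(D/(2*(t+1)*B)))⁻¹/2))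
      ≤ Real.sqrt ((t+1)/t) * Real.exp (N'/(2*t*B)) := by
  have ht0 : 0 < t := by linarith
  have ht1 : 0 < t + 1 := by linarith
  set β : ℝ := D/(2*(t+1)*B) with hβdef
  have hβ0 : 0 ≤ β := by positivity
  have h2β : 2*β ≤ 1/(t+1) := by
    have he : 2*β = D/((t+1)*B) := by rw [hβdef]; field_simp
    rw [he, show (1:ℝ)/(t+1) = B/((t+1)*B) by field_simp]
    gcongr
  have hub : t/(t+1) ≤ 1 - 2*β := by
    have : 1 - 1/(t+1) = t/(t+1) := by field_simp; ring
    linarith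
  have hubpos : (0:ℝ) < t/(t+1) := by positivity
  have h1β : 0 < 1 - 2*β := lt_of_lt_of_le hubpos hub
  have hinv : (1-2*β)⁻¹ ≤ (t+1)/t := by
    rw [show ((t+1)/t : ℝ) = (t/(t+1))⁻¹ by rw [inv_div]]
    exact inv_anti₀ hubpos hub
  have hinv0 : 0 ≤ (1-2*β)⁻¹ := by positivity
  have hC2 : C^2 ≤ N' * B := le_trans hCS (mul_le_mul_of_nonneg_left hDB hN')
  have hsqrt : Real.sqrt (1-2*β)⁻¹ ≤ Real.sqrt ((t+1)/t) := Real.sqrt_le_sqrt hinv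
  have hexp : N'/(2*(t+1)*B) + (C/((t+1)*B))^2 * (1-2*β)⁻¹/2 ≤ N'/(2*t*B) := by
    have h1 : (C/((t+1)*B))^2 * (1-2*β)⁻¹/2 ≤ (N'*B/((t+1)*B)^2) * ((t+1)/t)/2 := by
      apply div_le_div_of_nonneg_right _ (by norm_num) |>.trans_eq rfl
      apply mul_le_mul _ hinv hinv0 (by positivity)
      rw [div_pow, div_le_div_iff₀ (by positivity) (by positivity)]
      nlinarith
    have h2 : (N'*B/((t+1)*B)^2) * ((t+1)/t)/2 = N'/(2*(t+1)*B*t) := by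
      field_simp
    have h3 : N'/(2*(t+1)*B) + N'/(2*(t+1)*B*t) = N'/(2*t*B) := by
      field_simp
    linarith [h1.trans_eq h2]
  calc Real.exp (N'/(2*(t+1)*B)) *
        (Real.sqrt (1-2*β)⁻¹ * Real.exp ((C/((t+1)*B))^2 * (1-2*β)⁻¹/2))
      = Real.sqrt (1-2*β)⁻¹ * Real.exp (N'/(2*(t+1)*B) + (C/((t+1)*B))^2 * (1-2*β)⁻¹/2) := by
        rw [Real.exp_add]; ring
    _ ≤ Real.sqrt ((t+1)/t) * Real.exp (N'/(2*t*B)) := by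
        apply mul_le_mul hsqrt (Real.exp_le_exp.mpr hexp) (Real.exp_pos _).le (Real.sqrt_nonneg _)

lemma meas_S_aux {Ω : Type*} [m0 : MeasurableSpace Ω] {n m t : ℕ}
    {ε : ℕ → Ω → ℝ} {x : ℕ → Ω → Fin n → ℝ} {a : ℕ → Ω → Fin m → ℝ}
    (hε : ∀ s ∈ Finset.Icc 2 t, Measurable (ε s))
    (hx : ∀ s ∈ Finset.Icc 2 t, Measurable (x s))
    (ha : ∀ s ∈ Finset.Icc 2 t, Measurable (a s)) :
    Measurable (fun ω => (fun i j => ∑ s ∈ Finset.Icc 2 t, ε s ω * x s ω i * a s ω j :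
      Fin n → Fin m → ℝ)) := by
  apply measurable_pi_lambda
  intro i
  apply measurable_pi_lambda
  intro j
  apply Finset.measurable_sum
  intro s hs
  exact (((hε s hs).mul ((hx s hs).eval)).mul ((ha s hs).eval))

def fAux (n m : ℕ) (c : ℝ) : ℝ × ((Fin n → Fin m → ℝ) × (Fin n → ℝ) × (Fin m → ℝ)) → ENNReal :=
  fun p => ENNReal.ofReal (Real.exp ((∑ i : Fin n, ∑ j : Fin m,
    (p.2.1 i j + p.1 * p.2.2.1 i * p.2.2.2 j)^2) / c))

lemma fAux_meas (n m : ℕ) (c : ℝ) : Measurable (fAux n m c) := by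
  apply Measurable.ennreal_ofReal
  apply Measurable.exp
  apply Measurable.div_const
  apply Finset.measurable_sum
  intro i _
  apply Finset.measurable_sum
  intro j _
  have hb : Measurable fun p : ℝ × ((Fin n → Fin m → ℝ) × (Fin n → ℝ) × (Fin m → ℝ)) =>
      p.2.1 i j + p.1 * p.2.2.1 i * p.2.2.2 j :=
    by fun_prop
  exact hb.pow_const 2

lemma gAux_meas (n m : ℕ) (c : ℝ) :
    Measurable (fun z : (Fin n → Fin m → ℝ) × (Fin n → ℝ) × (Fin m → ℝ) =>
      ENNReal.ofReal (Real.exp ((∑ i : Fin n, ∑ j : Fin m, (z.1 i j)^2) / c))) := by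
  apply Measurable.ennreal_ofReal
  apply Measurable.exp
  apply Measurable.div_const
  apply Finset.measurable_sum
  intro i _
  apply Finset.measurable_sum
  intro j _
  exact measurable_fst.eval.eval.pow_const 2

lemma inner_bound_aux {n m : ℕ} (r B : ℝ) (hr : 1 ≤ r) (hB : 0 < B)
    (z : (Fin n → Fin m → ℝ) × (Fin n → ℝ) × (Fin m → ℝ))
    (hzx : (∑ i, (z.2.1 i)^2) ≤ B) (hza : (∑ j, (z.2.2 j)^2) = 1) :
    ∫⁻ e, ENNReal.ofReal (Real.exp ((∑ i : Fin n, ∑ j : Fin m,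
        (z.1 i j + e * z.2.1 i * z.2.2 j)^2) / (2*(r+1)*B))) ∂(gaussianReal 0 1)
      ≤ ENNReal.ofReal (Real.sqrt ((r+1)/r) *
          Real.exp ((∑ i : Fin n, ∑ j : Fin m, (z.1 i j)^2) / (2*r*B))) := by
  have hr0 : (0:ℝ) < r := by linarith
  set N' : ℝ := ∑ i : Fin n, ∑ j : Fin m, (z.1 i j)^2 with hN'def
  set C : ℝ := ∑ i : Fin n, ∑ j : Fin m, z.1 i j * (z.2.1 i * z.2.2 j) with hCdef
  set D : ℝ := (∑ i, (z.2.1 i)^2) * (∑ j, (z.2.2 j)^2) with hDdef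
  have hN'0 : 0 ≤ N' := by positivity
  have hD0 : 0 ≤ D := by
    rw [hDdef]
    apply mul_nonneg <;> positivity
  have hDB : D ≤ B := by rw [hDdef, hza, mul_one]; exact hzx
  have h1 : C = ∑ p : Fin n × Fin m, z.1 p.1 p.2 * (z.2.1 p.1 * z.2.2 p.2) := by
    rw [hCdef, Fintype.sum_prod_type]
  have h2 : N' = ∑ p : Fin n × Fin m, (z.1 p.1 p.2)^2 := by
    rw [hN'def, Fintype.sum_prod_type]
  have h3 : D = ∑ p : Fin n × Fin m, (z.2.1 p.1 * z.2.2 p.2)^2 := by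
    rw [hDdef, Fintype.sum_prod_type, Finset.sum_mul_sum]
    exact Finset.sum_congr rfl fun i _ => Finset.sum_congr rfl fun j _ => by ring
  have hCS : C^2 ≤ N' * D := by
    rw [h1, h2, h3]
    exact Finset.sum_mul_sq_le_sq_mul_sq _ _ _
  set α : ℝ := C / ((r+1)*B) with hαdef
  set β : ℝ := D / (2*(r+1)*B) with hβdef
  have hβlt : β < 1/2 := by
    rw [hβdef, div_lt_iff₀ (by positivity)]
    nlinarith
  have hexpand : ∀ e : ℝ, (∑ i : Fin n, ∑ j : Fin m, (z.1 i j + e * z.2.1 i * z.2.2 j)^2)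
      = N' + 2*e*C + e^2*D := by
    intro e
    have hterm : ∀ (i : Fin n) (j : Fin m), (z.1 i j + e * z.2.1 i * z.2.2 j)^2
        = (z.1 i j)^2 + (2*e)*(z.1 i j * (z.2.1 i * z.2.2 j))
          + e^2*((z.2.1 i)^2 * (z.2.2 j)^2) := fun i j => by ring
    simp_rw [hterm, Finset.sum_add_distrib, ← Finset.mul_sum]
    rw [← hN'def, ← hCdef, ← Finset.sum_mul, ← hDdef]
  have hpt : ∀ e : ℝ, ENNReal.ofReal (Real.exp ((∑ i : Fin n, ∑ j : Fin m,
        (z.1 i j + e * z.2.1 i * z.2.2 j)^2) / (2*(r+1)*B)))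
      = ENNReal.ofReal (Real.exp (N'/(2*(r+1)*B))) * ENNReal.ofReal (Real.exp (α*e + β*e^2)) := by
    intro e
    rw [← ENNReal.ofReal_mul (Real.exp_pos _).le, ← Real.exp_add]
    congr 1
    rw [hexpand e, hαdef, hβdef]
    field_simp
    ring
  calc ∫⁻ e, ENNReal.ofReal (Real.exp ((∑ i : Fin n, ∑ j : Fin m,
        (z.1 i j + e * z.2.1 i * z.2.2 j)^2) / (2*(r+1)*B))) ∂(gaussianReal 0 1)
      = ENNReal.ofReal (Real.exp (N'/(2*(r+1)*B))) *
        ∫⁻ e, ENNReal.ofReal (Real.exp (α*e + β*e^2)) ∂(gaussianReal 0 1) := by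
        rw [← lintegral_const_mul _ (by fun_prop)]
        exact lintegral_congr hpt
    _ = ENNReal.ofReal (Real.exp (N'/(2*(r+1)*B))) *
        ENNReal.ofReal (Real.sqrt (1-2*β)⁻¹ * Real.exp (α^2 * (1-2*β)⁻¹ / 2)) := by
        rw [gauss_exp_quad α β hβlt]
    _ ≤ ENNReal.ofReal (Real.sqrt ((r+1)/r) * Real.exp (N'/(2*r*B))) := by
        rw [← ENNReal.ofReal_mul (Real.exp_pos _).le]
        apply ENNReal.ofReal_le_ofReal
        exact step_real_bound r B N' C D hr hB hN'0 hD0 hDB hCS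

/-- sub-Gaussian control of the Frobenius norm of the adapted random matrix
`W_T = Σ_{t=2}^T ε_t x_t a_tᵀ`, where `a_t` is `F_{t−1}`-measurable with unit norm, `x_t` is
`F_t`-measurable with `‖x_t‖₂² ≤ B`, and conditionally on `σ(F_{t−1}, x_t)` the variable `ε_t`
is standard normal (encoded as: `ε_t ~ N(0,1)` and `ε_t` independent of `F_{t−1} ⊔ σ(x_t)`).
Then `E[exp(‖W_T‖_F²/(2TB))] ≤ T`. -/
theorem martingale_frobenius_mgf {Ω : Type*} {mΩ : MeasurableSpace Ω}
    (P : Measure Ω) [IsProbabilityMeasure P]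
    (T m n : ℕ) (hT : 2 ≤ T) (B : ℝ) (hB : 0 < B)
    (ℱ : Filtration ℕ mΩ)
    (a : ℕ → Ω → (Fin m → ℝ)) (x : ℕ → Ω → (Fin n → ℝ)) (ε : ℕ → Ω → ℝ)
    (ha_meas : ∀ t, 2 ≤ t → t ≤ T → Measurable[ℱ (t - 1)] (a t))
    (ha_norm : ∀ t, 2 ≤ t → t ≤ T → ∀ᵐ ω ∂P, ∑ i, (a t ω i) ^ 2 = 1)
    (hx_meas : ∀ t, 2 ≤ t → t ≤ T → Measurable[ℱ t] (x t))
    (hx_bound : ∀ t, 2 ≤ t → t ≤ T → ∀ᵐ ω ∂P, ∑ i, (x t ω i) ^ 2 ≤ B)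
    (hε_meas : ∀ t, 2 ≤ t → t ≤ T → Measurable[ℱ t] (ε t))
    (hε_law : ∀ t, 2 ≤ t → t ≤ T → Measure.map (ε t) P = gaussianReal 0 1)
    (hε_indep : ∀ t, 2 ≤ t → t ≤ T →
      Indep (MeasurableSpace.comap (ε t) inferInstance)
        (ℱ (t - 1) ⊔ MeasurableSpace.comap (x t) inferInstance) P) :
    ∫ ω, Real.exp
        ((∑ i : Fin n, ∑ j : Fin m,
            (∑ t ∈ Finset.Icc 2 T, ε t ω * x t ω i * a t ω j) ^ 2) / (2 * T * B)) ∂P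
      ≤ T := by
  have hεM : ∀ s, 2 ≤ s → s ≤ T → Measurable (ε s) :=
    fun s h1 h2 => (hε_meas s h1 h2).mono (ℱ.le s) le_rfl
  have hxM : ∀ s, 2 ≤ s → s ≤ T → Measurable (x s) :=
    fun s h1 h2 => (hx_meas s h1 h2).mono (ℱ.le s) le_rfl
  have haM : ∀ s, 2 ≤ s → s ≤ T → Measurable (a s) :=
    fun s h1 h2 => (ha_meas s h1 h2).mono (ℱ.le (s-1)) le_rfl
  have claim : ∀ t, 1 ≤ t → t ≤ T →
      ∫⁻ ω, ENNReal.ofReal (Real.exp ((∑ i : Fin n, ∑ j : Fin m,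
          (∑ s ∈ Finset.Icc 2 t, ε s ω * x s ω i * a s ω j)^2) / (2*(t:ℝ)*B))) ∂P
        ≤ ENNReal.ofReal (Real.sqrt t) := by
    intro t ht
    induction t, ht using Nat.le_induction with
    | base =>
      intro _
      have hN1 : ∀ ω, (∑ i : Fin n, ∑ j : Fin m,
          (∑ s ∈ Finset.Icc 2 1, ε s ω * x s ω i * a s ω j)^2) = 0 := fun ω => by
        simp [Finset.Icc_eq_empty (by omega : ¬ (2:ℕ) ≤ 1)]
      calc ∫⁻ ω, ENNReal.ofReal (Real.exp ((∑ i : Fin n, ∑ j : Fin m,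
              (∑ s ∈ Finset.Icc 2 1, ε s ω * x s ω i * a s ω j)^2) / (2*((1:ℕ):ℝ)*B))) ∂P
          = ∫⁻ _, 1 ∂P := lintegral_congr fun ω => by
            rw [hN1, zero_div, Real.exp_zero, ENNReal.ofReal_one]
        _ = 1 := by simp
        _ ≤ ENNReal.ofReal (Real.sqrt (1:ℕ)) := by
            simp [Real.sqrt_one]
    | succ t ht ih =>
      intro hle
      have htT : t ≤ T := by omega
      have h2τ : 2 ≤ t + 1 := by omega
      have htR : (1:ℝ) ≤ (t:ℝ) := by exact_mod_cast ht
      have htR0 : (0:ℝ) < (t:ℝ) := by linarith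
      have hcast : ((t+1 : ℕ):ℝ) = (t:ℝ)+1 := by push_cast; ring
      set S : Ω → Fin n → Fin m → ℝ :=
        fun ω i j => ∑ s ∈ Finset.Icc 2 t, ε s ω * x s ω i * a s ω j with hSdef
      have hSF : Measurable[ℱ t] S := by
        apply meas_S_aux (m0 := ℱ t) <;>
          · intro s hs
            rw [Finset.mem_Icc] at hs
            first
            | exact (hε_meas s hs.1 (le_trans hs.2 htT)).mono (ℱ.mono hs.2) le_rfl
            | exact (hx_meas s hs.1 (le_trans hs.2 htT)).mono (ℱ.mono hs.2) le_rfl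
            | exact (ha_meas s hs.1 (le_trans hs.2 htT)).mono
                (ℱ.mono (by omega : s - 1 ≤ t)) le_rfl
      set Z : Ω → (Fin n → Fin m → ℝ) × (Fin n → ℝ) × (Fin m → ℝ) :=
        fun ω => (S ω, x (t+1) ω, a (t+1) ω) with hZdef
      have hZsup : Measurable[ℱ t ⊔ MeasurableSpace.comap (x (t+1)) inferInstance] Z := by
        refine Measurable.prodMk (hSF.mono le_sup_left le_rfl) (Measurable.prodMk ?_ ?_)
        · exact (measurable_iff_comap_le.mpr le_rfl).mono le_sup_right le_rfl
        · exact (ha_meas (t+1) h2τ hle).mono le_sup_left le_rfl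
      have hZM : Measurable Z :=
        hZsup.mono (sup_le (ℱ.le t) (measurable_iff_comap_le.mp (hxM (t+1) h2τ hle))) le_rfl
      have hεZ : IndepFun (ε (t+1)) Z P :=
        my_indep_mono (hε_indep (t+1) h2τ hle) le_rfl (measurable_iff_comap_le.mp hZsup)
      have hmap : P.map (fun ω => (ε (t+1) ω, Z ω)) = (gaussianReal 0 1).prod (P.map Z) := by
        rw [← hε_law (t+1) h2τ hle]
        exact (indepFun_iff_map_prod_eq_prod_map_map
          (hεM (t+1) h2τ hle).aemeasurable hZM.aemeasurable).mp hεZ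
      have hf := fAux_meas n m (2*((t:ℝ)+1)*B)
      -- a.e. properties of the law of Z
      have hgood1 : ∀ᵐ z ∂(P.map Z),
          (∑ i, ((z : (Fin n → Fin m → ℝ) × (Fin n → ℝ) × (Fin m → ℝ)).2.1 i)^2) ≤ B := by
        refine (ae_map_iff hZM.aemeasurable ?_).mpr ?_
        · exact measurableSet_le (Finset.measurable_sum _ fun i _ =>
            (by fun_prop : Measurable fun z : (Fin n → Fin m → ℝ) × (Fin n → ℝ) × (Fin m → ℝ)
              => z.2.1 i ^ 2)) measurable_const
        · filter_upwards [hx_bound (t+1) h2τ hle] with ω h1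
          exact h1
      have hgood2 : ∀ᵐ z ∂(P.map Z),
          (∑ j, ((z : (Fin n → Fin m → ℝ) × (Fin n → ℝ) × (Fin m → ℝ)).2.2 j)^2) = 1 := by
        refine (ae_map_iff hZM.aemeasurable ?_).mpr ?_
        · exact measurableSet_eq_fun (Finset.measurable_sum _ fun j _ =>
            (by fun_prop : Measurable fun z : (Fin n → Fin m → ℝ) × (Fin n → ℝ) × (Fin m → ℝ)
              => z.2.2 j ^ 2)) measurable_const
        · filter_upwards [ha_norm (t+1) h2τ hle] with ω h1
          exact h1
      calc ∫⁻ ω, ENNReal.ofReal (Real.exp ((∑ i : Fin n, ∑ j : Fin m,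
              (∑ s ∈ Finset.Icc 2 (t+1), ε s ω * x s ω i * a s ω j)^2) / (2*((t+1:ℕ):ℝ)*B))) ∂P
          = ∫⁻ ω, fAux n m (2*((t:ℝ)+1)*B) (ε (t+1) ω, Z ω) ∂P := by
            apply lintegral_congr
            intro ω
            have hsum : ∀ (i : Fin n) (j : Fin m),
                (∑ s ∈ Finset.Icc 2 (t+1), ε s ω * x s ω i * a s ω j)
                  = S ω i j + ε (t+1) ω * x (t+1) ω i * a (t+1) ω j := fun i j =>
              Finset.sum_Icc_succ_top (by omega) _
            simp only [fAux, hZdef]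
            rw [hcast]
            simp_rw [hsum]
        _ = ∫⁻ p, fAux n m (2*((t:ℝ)+1)*B) p ∂(P.map (fun ω => (ε (t+1) ω, Z ω))) :=
            (lintegral_map hf ((hεM (t+1) h2τ hle).prodMk hZM)).symm
        _ = ∫⁻ p, fAux n m (2*((t:ℝ)+1)*B) p ∂((gaussianReal 0 1).prod (P.map Z)) := by
            rw [hmap]
        _ = ∫⁻ z, ∫⁻ e, fAux n m (2*((t:ℝ)+1)*B) (e, z) ∂(gaussianReal 0 1) ∂(P.map Z) :=
            lintegral_prod_symm' _ hf
        _ ≤ ∫⁻ z, ENNReal.ofReal (Real.sqrt (((t:ℝ)+1)/t) *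
              Real.exp ((∑ i : Fin n, ∑ j : Fin m, (z.1 i j)^2) / (2*(t:ℝ)*B))) ∂(P.map Z) := by
            apply lintegral_mono_ae
            filter_upwards [hgood1, hgood2] with z hz1 hz2
            exact inner_bound_aux (t:ℝ) B htR hB z hz1 hz2
        _ = ENNReal.ofReal (Real.sqrt (((t:ℝ)+1)/t)) *
            ∫⁻ z, ENNReal.ofReal (Real.exp ((∑ i : Fin n, ∑ j : Fin m, (z.1 i j)^2)
              / (2*(t:ℝ)*B))) ∂(P.map Z) := by
            rw [← lintegral_const_mul _ (gAux_meas n m (2*(t:ℝ)*B))]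
            apply lintegral_congr
            intro z
            rw [← ENNReal.ofReal_mul (Real.sqrt_nonneg _)]
        _ = ENNReal.ofReal (Real.sqrt (((t:ℝ)+1)/t)) *
            ∫⁻ ω, ENNReal.ofReal (Real.exp ((∑ i : Fin n, ∑ j : Fin m,
              (∑ s ∈ Finset.Icc 2 t, ε s ω * x s ω i * a s ω j)^2) / (2*(t:ℝ)*B))) ∂P := by
            rw [lintegral_map (gAux_meas n m (2*(t:ℝ)*B)) hZM]
        _ ≤ ENNReal.ofReal (Real.sqrt (((t:ℝ)+1)/t)) * ENNReal.ofReal (Real.sqrt t) :=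
            mul_le_mul_right (ih htT) _
        _ = ENNReal.ofReal (Real.sqrt ((t+1:ℕ):ℝ)) := by
            rw [← ENNReal.ofReal_mul (Real.sqrt_nonneg _), ← Real.sqrt_mul (by positivity),
              div_mul_cancel₀ _ (ne_of_gt htR0), hcast]
  -- conclude
  have hTc := claim T (by omega) le_rfl
  have hnonneg : 0 ≤ᵐ[P] fun ω => Real.exp ((∑ i : Fin n, ∑ j : Fin m,
      (∑ s ∈ Finset.Icc 2 T, ε s ω * x s ω i * a s ω j)^2) / (2*(T:ℝ)*B)) :=
    Filter.Eventually.of_forall fun ω => (Real.exp_pos _).le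
  have hmeas : AEStronglyMeasurable (fun ω => Real.exp ((∑ i : Fin n, ∑ j : Fin m,
      (∑ s ∈ Finset.Icc 2 T, ε s ω * x s ω i * a s ω j)^2) / (2*(T:ℝ)*B))) P := by
    apply Measurable.aestronglyMeasurable
    apply Measurable.exp
    apply Measurable.div_const
    apply Finset.measurable_sum
    intro i _
    apply Finset.measurable_sum
    intro j _
    apply Measurable.pow_const
    apply Finset.measurable_sum
    intro s hs
    rw [Finset.mem_Icc] at hs
    exact ((hεM s hs.1 hs.2).mul ((hxM s hs.1 hs.2).eval)).mul ((haM s hs.1 hs.2).eval)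
  rw [integral_eq_lintegral_of_nonneg_ae hnonneg hmeas]
  have h1 : (∫⁻ ω, ENNReal.ofReal (Real.exp ((∑ i : Fin n, ∑ j : Fin m,
      (∑ s ∈ Finset.Icc 2 T, ε s ω * x s ω i * a s ω j)^2) / (2*(T:ℝ)*B))) ∂P).toReal
      ≤ Real.sqrt T :=
    ENNReal.toReal_le_of_le_ofReal (Real.sqrt_nonneg _) hTc
  have h2 : Real.sqrt T ≤ (T:ℝ) := by
    have hT1 : (1:ℝ) ≤ (T:ℝ) := by exact_mod_cast (by omega : 1 ≤ T)
    have := Real.sqrt_le_sqrt (show (T:ℝ) ≤ (T:ℝ)^2 by nlinarith)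
    rwa [Real.sqrt_sq (by linarith)] at this
  linarith

end
end

section
/- Let (F_t)_{t=1}^{T} be a filtration on a probability space with T ≥ 2, and let B > 0. For each t = 2, …, T, let a_t ∈ R^m be an F_{t−1}-measurable random vector with ‖a_t‖₂ = 1 almost surely, let x_t ∈ R^n be a random vector with ‖x_t‖₂² ≤ B almost surely, and let ε_t be a real random variable, with x_t, ε_t both F_t-measurable, such that conditionally on the σ-algebra generated by F_{t−1} and x_t, the variable ε_t has the standard normal distribution N(0,1). Define W_T = Σ_{t=2}^{T} ε_t x_t a_tᵀ ∈ R^{n×m}. Then for every s > 0, P( ‖W_T‖_F ≥ s ) ≤ T · exp( −s² / (2TB) ). -/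
open MeasureTheory ProbabilityTheory Finset

noncomputable section

private lemma mft_exp_eq (k β : ℝ) (hk : 0 < k) (y : ℝ) :
    Real.exp (-k * y ^ 2 + β * y)
      = Real.exp (β ^ 2 / (4 * k)) * Real.exp (-k * (y - β / (2 * k)) ^ 2) := by
  rw [← Real.exp_add]
  congr 1
  field_simp
  ring

private lemma mft_integrable (k β : ℝ) (hk : 0 < k) :
    MeasureTheory.Integrable (fun y : ℝ => Real.exp (-k * y ^ 2 + β * y)) := by
  simp_rw [mft_exp_eq k β hk]
  exact ((integrable_exp_neg_mul_sq hk).comp_sub_right (β / (2 * k))).const_mul _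

private lemma mft_integral (k β : ℝ) (hk : 0 < k) :
    ∫ y : ℝ, Real.exp (-k * y ^ 2 + β * y)
      = Real.sqrt (Real.pi / k) * Real.exp (β ^ 2 / (4 * k)) := by
  simp_rw [mft_exp_eq k β hk]
  rw [integral_const_mul,
    integral_sub_right_eq_self (fun y => Real.exp (-k * y ^ 2)) (β / (2 * k)),
    integral_gaussian]
  ring

private lemma mft_gauss_lintegral (α β : ℝ) (hα : α < 1/2) :
    ∫⁻ y, ENNReal.ofReal (Real.exp (α * y ^ 2 + β * y)) ∂(gaussianReal 0 1)
      = ENNReal.ofReal ((Real.sqrt (1 - 2 * α))⁻¹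
          * Real.exp (β ^ 2 / (2 * (1 - 2 * α)))) := by
  have hk : (0:ℝ) < 1/2 - α := by linarith
  rw [gaussianReal_of_var_ne_zero _ one_ne_zero,
    lintegral_withDensity_eq_lintegral_mul _ (measurable_gaussianPDF 0 1)
      (by fun_prop)]
  have heq : ∀ y : ℝ, (gaussianPDF 0 1 * fun y => ENNReal.ofReal (Real.exp (α * y ^ 2 + β * y))) y
      = ENNReal.ofReal ((Real.sqrt (2 * Real.pi))⁻¹ * Real.exp (-(1/2 - α) * y ^ 2 + β * y)) := by
    intro y
    simp only [Pi.mul_apply, gaussianPDF, gaussianPDFReal, NNReal.coe_one, mul_one, sub_zero]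
    rw [← ENNReal.ofReal_mul (by positivity)]
    congr 1
    rw [mul_assoc, ← Real.exp_add]
    congr 2
    ring
  rw [lintegral_congr heq]
  rw [← ofReal_integral_eq_lintegral_ofReal
      ((mft_integrable _ β hk).const_mul _)
      (ae_of_all _ fun y => by positivity)]
  rw [integral_const_mul, mft_integral _ β hk]
  congr 1
  have h1 : (1 : ℝ) - 2 * α = 2 * (1/2 - α) := by ring
  have h2 : Real.sqrt (Real.pi / (1/2 - α))
      = Real.sqrt (2 * Real.pi) * (Real.sqrt (1 - 2 * α))⁻¹ := by
    rw [h1, show Real.pi / (1/2 - α) = (2 * Real.pi) * (2 * (1/2 - α))⁻¹ by field_simp,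
      Real.sqrt_mul (by positivity), Real.sqrt_inv]
  rw [h2]
  have h3 : β ^ 2 / (4 * (1/2 - α)) = β ^ 2 / (2 * (1 - 2 * α)) := by rw [h1]; ring_nf
  rw [h3]
  have : Real.sqrt (2 * Real.pi) ≠ 0 := by positivity
  field_simp

private lemma mft_step_real_bound (u : ℕ) (hu : 1 ≤ u) {B q v c : ℝ} (hB : 0 < B) (hq : 0 ≤ q)
    (hc0 : 0 ≤ c) (hcB : c ≤ B) (hv : v ^ 2 ≤ q * c) :
    Real.exp ((2 * B * ((u : ℝ) + 1))⁻¹ * q) *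
      ((Real.sqrt (1 - 2 * ((2 * B * ((u : ℝ) + 1))⁻¹ * c)))⁻¹ *
        Real.exp ((2 * ((2 * B * ((u : ℝ) + 1))⁻¹ * v)) ^ 2
          / (2 * (1 - 2 * ((2 * B * ((u : ℝ) + 1))⁻¹ * c)))))
      ≤ Real.sqrt (((u : ℝ) + 1) / u) * Real.exp (q / (2 * B * u)) := by
  have hu1 : (1 : ℝ) ≤ (u : ℝ) := by exact_mod_cast hu
  have hU : (0 : ℝ) < u := by linarith
  set L : ℝ := (2 * B * ((u : ℝ) + 1))⁻¹ with hLdef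
  have hL : 0 < L := by positivity
  have h2LB : 2 * (L * B) = ((u : ℝ) + 1)⁻¹ := by
    rw [hLdef]; field_simp
  have hfrac : (u : ℝ) / (u + 1) = 1 - ((u : ℝ) + 1)⁻¹ := by field_simp; ring
  have hden : (u : ℝ) / (u + 1) ≤ 1 - 2 * (L * c) := by
    rw [hfrac, ← h2LB]
    have : L * c ≤ L * B := by nlinarith
    linarith
  have hdenpos : (0 : ℝ) < (u : ℝ) / (u + 1) := by positivity
  have hD : 0 < 1 - 2 * (L * c) := lt_of_lt_of_le hdenpos hden
  have hsqrt : (Real.sqrt (1 - 2 * (L * c)))⁻¹ ≤ Real.sqrt (((u : ℝ) + 1) / u) := by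
    calc (Real.sqrt (1 - 2 * (L * c)))⁻¹ ≤ (Real.sqrt ((u : ℝ) / (u + 1)))⁻¹ :=
          inv_anti₀ (Real.sqrt_pos.mpr hdenpos) (Real.sqrt_le_sqrt hden)
      _ = Real.sqrt (((u : ℝ) + 1) / u) := by rw [← Real.sqrt_inv, inv_div]
  have hexp : L * q + (2 * (L * v)) ^ 2 / (2 * (1 - 2 * (L * c))) ≤ q / (2 * B * u) := by
    have hv2 : (2 * (L * v)) ^ 2 ≤ 4 * L ^ 2 * (q * c) := by nlinarith [sq_nonneg L]
    have step1 : L * q + (2 * (L * v)) ^ 2 / (2 * (1 - 2 * (L * c)))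
        ≤ L * q + 4 * L ^ 2 * (q * c) / (2 * (1 - 2 * (L * c))) := by gcongr
    have step2 : L * q + 4 * L ^ 2 * (q * c) / (2 * (1 - 2 * (L * c)))
        = L * q / (1 - 2 * (L * c)) := by
      have key : ∀ D : ℝ, D ≠ 0 → D = 1 - 2 * (L * c) →
          L * q + 4 * L ^ 2 * (q * c) / (2 * D) = L * q / D := by
        intro D hD0 hDe; field_simp; subst hDe; ring
      exact key _ hD.ne' rfl
    have step3 : L * q / (1 - 2 * (L * c)) ≤ L * q / ((u : ℝ) / (u + 1)) :=
      div_le_div_of_nonneg_left (by positivity) hdenpos hden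
    have step4 : L * q / ((u : ℝ) / (u + 1)) = q / (2 * B * u) := by
      rw [hLdef]; field_simp
    linarith [step1, step2 ▸ step1, step3, step4 ▸ step3]
  calc Real.exp (L * q) * ((Real.sqrt (1 - 2 * (L * c)))⁻¹ *
        Real.exp ((2 * (L * v)) ^ 2 / (2 * (1 - 2 * (L * c)))))
      = (Real.sqrt (1 - 2 * (L * c)))⁻¹ *
        Real.exp (L * q + (2 * (L * v)) ^ 2 / (2 * (1 - 2 * (L * c)))) := by
        rw [Real.exp_add]; ring
    _ ≤ Real.sqrt (((u : ℝ) + 1) / u) * Real.exp (q / (2 * B * u)) :=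
        mul_le_mul hsqrt (Real.exp_le_exp.mpr hexp) (Real.exp_pos _).le (Real.sqrt_nonneg _)

private lemma mft_expand_sq {n m : ℕ} (S : Fin n → Fin m → ℝ) (xv : Fin n → ℝ)
    (av : Fin m → ℝ) (e : ℝ) :
    ∑ i, ∑ j, (S i j + e * xv i * av j) ^ 2
      = (∑ i, ∑ j, S i j ^ 2) + 2 * e * (∑ i, ∑ j, S i j * (xv i * av j))
        + e ^ 2 * ((∑ i, xv i ^ 2) * (∑ j, av j ^ 2)) := by
  have h : ∀ i : Fin n, ∀ j : Fin m, (S i j + e * xv i * av j) ^ 2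
      = S i j ^ 2 + 2 * e * (S i j * (xv i * av j)) + e ^ 2 * (xv i ^ 2 * av j ^ 2) := by
    intros; ring
  simp_rw [h, Finset.sum_add_distrib, ← Finset.mul_sum, ← Finset.sum_mul]

private lemma mft_cs {n m : ℕ} (S : Fin n → Fin m → ℝ) (xv : Fin n → ℝ) (av : Fin m → ℝ) :
    (∑ i, ∑ j, S i j * (xv i * av j)) ^ 2
      ≤ (∑ i, ∑ j, S i j ^ 2) * ((∑ i, xv i ^ 2) * (∑ j, av j ^ 2)) := by
  have h := Finset.sum_mul_sq_le_sq_mul_sq Finset.univ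
      (fun p : Fin n × Fin m => S p.1 p.2) (fun p : Fin n × Fin m => xv p.1 * av p.2)
  rw [Fintype.sum_prod_type, Fintype.sum_prod_type, Fintype.sum_prod_type] at h
  have h2 : ∑ i : Fin n, ∑ j : Fin m, (xv i * av j) ^ 2
      = (∑ i, xv i ^ 2) * (∑ j, av j ^ 2) := by
    simp_rw [mul_pow, ← Finset.mul_sum, ← Finset.sum_mul]
  rw [h2] at h
  exact h

private lemma mft_meas_triple_sum {Ω : Type*} {M : MeasurableSpace Ω} {n m : ℕ} {u₀ : ℕ}
    {ε' : ℕ → Ω → ℝ} {x' : ℕ → Ω → Fin n → ℝ} {a' : ℕ → Ω → Fin m → ℝ}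
    (hε : ∀ t ∈ Finset.Icc 2 u₀, Measurable[M] (ε' t))
    (hx : ∀ t ∈ Finset.Icc 2 u₀, Measurable[M] (x' t))
    (ha : ∀ t ∈ Finset.Icc 2 u₀, Measurable[M] (a' t))
    (i : Fin n) (j : Fin m) :
    Measurable[M] (fun ω => ∑ t ∈ Finset.Icc 2 u₀, ε' t ω * x' t ω i * a' t ω j) :=
  Finset.measurable_sum _ fun t ht =>
    (((hε t ht).mul ((measurable_pi_apply i).comp (hx t ht))).mul
      ((measurable_pi_apply j).comp (ha t ht)))

/-- high-probability bound for the Frobenius norm of the adapted random matrix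
`W_T = Σ_{t=2}^T ε_t x_t a_tᵀ`, where `a_t` is `F_{t−1}`-measurable with unit norm, `x_t` is
`F_t`-measurable with `‖x_t‖₂² ≤ B`, and conditionally on `σ(F_{t−1}, x_t)` the variable `ε_t`
is standard normal (encoded as: `ε_t ~ N(0,1)` and `ε_t` independent of `F_{t−1} ⊔ σ(x_t)`).
Then `P(‖W_T‖_F ≥ s) ≤ T exp(−s²/(2TB))` for every `s > 0`. -/
theorem martingale_frobenius_tail {Ω : Type*} {mΩ : MeasurableSpace Ω}
    (P : Measure Ω) [IsProbabilityMeasure P]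
    (T m n : ℕ) (hT : 2 ≤ T) (B : ℝ) (hB : 0 < B)
    (ℱ : Filtration ℕ mΩ)
    (a : ℕ → Ω → (Fin m → ℝ)) (x : ℕ → Ω → (Fin n → ℝ)) (ε : ℕ → Ω → ℝ)
    (ha_meas : ∀ t, 2 ≤ t → t ≤ T → Measurable[ℱ (t - 1)] (a t))
    (ha_norm : ∀ t, 2 ≤ t → t ≤ T → ∀ᵐ ω ∂P, ∑ i, (a t ω i) ^ 2 = 1)
    (hx_meas : ∀ t, 2 ≤ t → t ≤ T → Measurable[ℱ t] (x t))
    (hx_bound : ∀ t, 2 ≤ t → t ≤ T → ∀ᵐ ω ∂P, ∑ i, (x t ω i) ^ 2 ≤ B)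
    (hε_meas : ∀ t, 2 ≤ t → t ≤ T → Measurable[ℱ t] (ε t))
    (hε_law : ∀ t, 2 ≤ t → t ≤ T → Measure.map (ε t) P = gaussianReal 0 1)
    (hε_indep : ∀ t, 2 ≤ t → t ≤ T →
      Indep (MeasurableSpace.comap (ε t) inferInstance)
        (ℱ (t - 1) ⊔ MeasurableSpace.comap (x t) inferInstance) P) :
    ∀ s : ℝ, 0 < s →
      P {ω | s ≤ Real.sqrt (∑ i : Fin n, ∑ j : Fin m,
            (∑ t ∈ Finset.Icc 2 T, ε t ω * x t ω i * a t ω j) ^ 2)}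
        ≤ ENNReal.ofReal ((T : ℝ) * Real.exp (-s ^ 2 / (2 * T * B))) := by
  intro s hs
  classical
  -- basic measurability (w.r.t. the ambient σ-algebra)
  have hεm : ∀ t, 2 ≤ t → t ≤ T → Measurable (ε t) :=
    fun t h1 h2 => (hε_meas t h1 h2).mono (ℱ.le t) le_rfl
  have hxm : ∀ t, 2 ≤ t → t ≤ T → Measurable (x t) :=
    fun t h1 h2 => (hx_meas t h1 h2).mono (ℱ.le t) le_rfl
  have ham : ∀ t, 2 ≤ t → t ≤ T → Measurable (a t) :=
    fun t h1 h2 => (ha_meas t h1 h2).mono (ℱ.le (t - 1)) le_rfl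
  set Q : ℕ → Ω → ℝ := fun u ω => ∑ i : Fin n, ∑ j : Fin m,
      (∑ t ∈ Finset.Icc 2 u, ε t ω * x t ω i * a t ω j) ^ 2 with hQdef
  have hQnonneg : ∀ u ω, 0 ≤ Q u ω := fun u ω =>
    Finset.sum_nonneg fun i _ => Finset.sum_nonneg fun j _ => sq_nonneg _
  have hQmeas : ∀ u, u ≤ T → Measurable (fun ω => Q u ω) := by
    intro u huT
    apply Finset.measurable_sum
    intro i _
    apply Finset.measurable_sum
    intro j _
    refine Measurable.pow_const ?_ 2
    refine mft_meas_triple_sum ?_ ?_ ?_ i j <;>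
      · intro t ht
        rw [Finset.mem_Icc] at ht
        first
        | exact hεm t ht.1 (ht.2.trans huT)
        | exact hxm t ht.1 (ht.2.trans huT)
        | exact ham t ht.1 (ht.2.trans huT)
  -- the key induction: exponential moment bound
  have key : ∀ u, 1 ≤ u → u ≤ T →
      ∫⁻ ω, ENNReal.ofReal (Real.exp (Q u ω / (2 * B * u))) ∂P
        ≤ ENNReal.ofReal (Real.sqrt u) := by
    intro u hu
    induction u, hu using Nat.le_induction with
    | base =>
      intro _
      have hQ1 : ∀ ω, Q 1 ω = 0 := by
        intro ω
        simp [hQdef, Finset.Icc_eq_empty (by omega : ¬ (2:ℕ) ≤ 1)]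
      simp only [hQ1, zero_div, Real.exp_zero, ENNReal.ofReal_one, lintegral_one,
        measure_univ, Nat.cast_one, Real.sqrt_one]
      exact le_rfl
    | succ u hu ih =>
      intro huT1
      have huT : u ≤ T := by omega
      have h2u1 : 2 ≤ u + 1 := by omega
      have hu1R : (1:ℝ) ≤ (u:ℝ) := by exact_mod_cast hu
      set L : ℝ := (2 * B * ((u:ℝ) + 1))⁻¹ with hLdef
      set V : Ω → ℝ := fun ω => ∑ i : Fin n, ∑ j : Fin m,
          (∑ t ∈ Finset.Icc 2 u, ε t ω * x t ω i * a t ω j)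
            * (x (u+1) ω i * a (u+1) ω j) with hVdef
      set C : Ω → ℝ := fun ω =>
          (∑ i, x (u+1) ω i ^ 2) * (∑ j, a (u+1) ω j ^ 2) with hCdef
      set Z : Ω → ℝ × ℝ × ℝ := fun ω => (Q u ω, V ω, C ω) with hZdef
      have hexpand : ∀ ω, Q (u+1) ω
          = Q u ω + 2 * ε (u+1) ω * V ω + (ε (u+1) ω) ^ 2 * C ω := by
        intro ω
        simp only [hQdef, hVdef, hCdef]
        have hsum : ∀ (i : Fin n) (j : Fin m),
            ∑ t ∈ Finset.Icc 2 (u+1), ε t ω * x t ω i * a t ω j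
              = (∑ t ∈ Finset.Icc 2 u, ε t ω * x t ω i * a t ω j)
                + ε (u+1) ω * x (u+1) ω i * a (u+1) ω j :=
          fun i j => Finset.sum_Icc_succ_top h2u1 _
        simp_rw [hsum]
        rw [mft_expand_sq]
      -- measurability w.r.t. G = ℱ u ⊔ σ(x (u+1))
      have hxm1 : Measurable (x (u+1)) := hxm (u+1) h2u1 huT1
      have hεm1 : Measurable (ε (u+1)) := hεm (u+1) h2u1 huT1
      have hGle : (ℱ u ⊔ MeasurableSpace.comap (x (u+1)) inferInstance) ≤ mΩ :=
        sup_le (ℱ.le u) (measurable_iff_comap_le.mp hxm1)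
      have hxG : Measurable[ℱ u ⊔ MeasurableSpace.comap (x (u+1)) inferInstance] (x (u+1)) :=
        (Measurable.of_comap_le le_rfl).mono le_sup_right le_rfl
      have haG : ∀ t, 2 ≤ t → t ≤ u + 1 →
          Measurable[ℱ u ⊔ MeasurableSpace.comap (x (u+1)) inferInstance] (a t) := by
        intro t h1 h2
        exact (ha_meas t h1 (by omega)).mono
          ((ℱ.mono (by omega : t - 1 ≤ u)).trans le_sup_left) le_rfl
      have hεG : ∀ t, 2 ≤ t → t ≤ u →
          Measurable[ℱ u ⊔ MeasurableSpace.comap (x (u+1)) inferInstance] (ε t) :=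
        fun t h1 h2 => (hε_meas t h1 (by omega)).mono
          ((ℱ.mono h2).trans le_sup_left) le_rfl
      have hxtG : ∀ t, 2 ≤ t → t ≤ u →
          Measurable[ℱ u ⊔ MeasurableSpace.comap (x (u+1)) inferInstance] (x t) :=
        fun t h1 h2 => (hx_meas t h1 (by omega)).mono
          ((ℱ.mono h2).trans le_sup_left) le_rfl
      have hQG : Measurable[ℱ u ⊔ MeasurableSpace.comap (x (u+1)) inferInstance]
          (fun ω => Q u ω) := by
        apply Finset.measurable_sum
        intro i _
        apply Finset.measurable_sum
        intro j _
        refine Measurable.pow_const ?_ 2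
        refine mft_meas_triple_sum ?_ ?_ ?_ i j <;>
          · intro t ht
            rw [Finset.mem_Icc] at ht
            first
            | exact hεG t ht.1 ht.2
            | exact hxtG t ht.1 ht.2
            | exact haG t ht.1 (by omega)
      have hVG : Measurable[ℱ u ⊔ MeasurableSpace.comap (x (u+1)) inferInstance] V := by
        apply Finset.measurable_sum
        intro i _
        apply Finset.measurable_sum
        intro j _
        refine Measurable.mul ?_
          (((measurable_pi_apply i).comp hxG).mul ((measurable_pi_apply j).comp
            (haG (u+1) h2u1 le_rfl)))
        refine mft_meas_triple_sum ?_ ?_ ?_ i j <;>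
          · intro t ht
            rw [Finset.mem_Icc] at ht
            first
            | exact hεG t ht.1 ht.2
            | exact hxtG t ht.1 ht.2
            | exact haG t ht.1 (by omega)
      have hCG : Measurable[ℱ u ⊔ MeasurableSpace.comap (x (u+1)) inferInstance] C := by
        refine Measurable.mul ?_ ?_
        · exact Finset.measurable_sum _ fun i _ =>
            ((measurable_pi_apply i).comp hxG).pow_const 2
        · exact Finset.measurable_sum _ fun j _ =>
            ((measurable_pi_apply j).comp (haG (u+1) h2u1 le_rfl)).pow_const 2
      have hZG : Measurable[ℱ u ⊔ MeasurableSpace.comap (x (u+1)) inferInstance] Z :=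
        hQG.prodMk (hVG.prodMk hCG)
      have hZm : Measurable Z := hZG.mono hGle le_rfl
      -- independence of ε (u+1) and Z
      have hind : IndepFun (ε (u+1)) Z P := by
        rw [IndepFun_iff]
        intro t1 t2 h1 h2
        have hle : MeasurableSpace.comap Z inferInstance
            ≤ (ℱ u ⊔ MeasurableSpace.comap (x (u+1)) inferInstance) :=
          measurable_iff_comap_le.mp hZG
        have hI := hε_indep (u+1) h2u1 huT1
        rw [Indep_iff] at hI
        have h2' : MeasurableSet[ℱ (u + 1 - 1) ⊔
            MeasurableSpace.comap (x (u+1)) inferInstance] t2 := by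
          simpa using hle t2 h2
        exact hI t1 t2 h1 h2'
      -- the integrand as a function of (ε (u+1), Z)
      set f : ℝ × (ℝ × ℝ × ℝ) → ENNReal := fun p =>
        ENNReal.ofReal (Real.exp (L * (p.2.1 + 2 * p.2.2.1 * p.1 + p.2.2.2 * p.1 ^ 2)))
        with hfdef
      have hfm : Measurable f := by
        apply ENNReal.measurable_ofReal.comp
        apply Real.measurable_exp.comp
        fun_prop
      have hrw : ∀ ω, ENNReal.ofReal (Real.exp (Q (u+1) ω / (2 * B * ((u:ℕ)+1 : ℕ))))
          = f (ε (u+1) ω, Z ω) := by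
        intro ω
        simp only [hfdef, hZdef]
        rw [hexpand ω]
        congr 1
        rw [hLdef]
        push_cast
        rw [div_eq_inv_mul]
        ring
      -- a.e. pointwise bound on the conditional integral
      have hgm : Measurable fun z : ℝ × ℝ × ℝ =>
          ∫⁻ y, f (y, z) ∂(gaussianReal 0 1) := by
        apply Measurable.lintegral_prod_left
        exact hfm
      have hae : ∀ᵐ ω ∂P,
          (fun z => ∫⁻ y, f (y, z) ∂(gaussianReal 0 1)) (Z ω)
            ≤ ENNReal.ofReal (Real.sqrt (((u:ℝ)+1)/u))
              * ENNReal.ofReal (Real.exp (Q u ω / (2 * B * u))) := by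
        filter_upwards [hx_bound (u+1) h2u1 huT1, ha_norm (u+1) h2u1 huT1] with ω hxB haN
        have hC0 : 0 ≤ C ω := by
          rw [hCdef]
          exact mul_nonneg (Finset.sum_nonneg fun i _ => sq_nonneg _)
            (Finset.sum_nonneg fun j _ => sq_nonneg _)
        have hCB : C ω ≤ B := by
          rw [hCdef]; simp only; rw [haN, mul_one]; exact hxB
        have hVC : (V ω) ^ 2 ≤ Q u ω * C ω := mft_cs _ _ _
        have hQ0 : 0 ≤ Q u ω := hQnonneg u ω
        have hL0 : 0 < L := by rw [hLdef]; positivity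
        have hα : L * C ω < 1/2 := by
          have h1 : L * C ω ≤ L * B := by nlinarith
          have h2 : L * B = (2 * ((u:ℝ) + 1))⁻¹ := by rw [hLdef]; field_simp
          have h3 : (2 * ((u:ℝ) + 1))⁻¹ < 1/2 := by
            rw [show (1:ℝ)/2 = (2:ℝ)⁻¹ by norm_num]
            apply inv_strictAnti₀ (by norm_num)
            linarith
          linarith [h1, h2 ▸ h1]
        have hinner : ∫⁻ y, f (y, Z ω) ∂(gaussianReal 0 1)
            = ENNReal.ofReal (Real.exp (L * Q u ω))
              * ENNReal.ofReal ((Real.sqrt (1 - 2 * (L * C ω)))⁻¹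
                * Real.exp ((2 * (L * V ω)) ^ 2 / (2 * (1 - 2 * (L * C ω))))) := by
          have hsplit : ∀ y : ℝ, f (y, Z ω)
              = ENNReal.ofReal (Real.exp (L * Q u ω))
                * ENNReal.ofReal (Real.exp ((L * C ω) * y ^ 2 + (2 * (L * V ω)) * y)) := by
            intro y
            simp only [hfdef, hZdef]
            rw [← ENNReal.ofReal_mul (Real.exp_pos _).le, ← Real.exp_add]
            congr 2
            ring
          rw [lintegral_congr hsplit, lintegral_const_mul _ (by fun_prop),
            mft_gauss_lintegral _ _ hα]
        rw [hinner]
        rw [← ENNReal.ofReal_mul (Real.exp_pos _).le]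
        rw [← ENNReal.ofReal_mul (Real.sqrt_nonneg _)]
        apply ENNReal.ofReal_le_ofReal
        exact mft_step_real_bound u hu hB hQ0 hC0 hCB hVC
      -- put everything together
      calc ∫⁻ ω, ENNReal.ofReal (Real.exp (Q (u+1) ω / (2 * B * ((u+1 : ℕ) : ℝ)))) ∂P
          = ∫⁻ ω, f (ε (u+1) ω, Z ω) ∂P := by
            refine lintegral_congr fun ω => ?_
            exact_mod_cast hrw ω
        _ = ∫⁻ p, f p ∂(P.map (fun ω => (ε (u+1) ω, Z ω))) :=
            (lintegral_map hfm (hεm1.prodMk hZm)).symm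
        _ = ∫⁻ p, f p ∂((gaussianReal 0 1).prod (P.map Z)) := by
            rw [(indepFun_iff_map_prod_eq_prod_map_map hεm1.aemeasurable
              hZm.aemeasurable).mp hind, hε_law (u+1) h2u1 huT1]
        _ = ∫⁻ z, ∫⁻ y, f (y, z) ∂(gaussianReal 0 1) ∂(P.map Z) :=
            lintegral_prod_symm' f hfm
        _ = ∫⁻ ω, (fun z => ∫⁻ y, f (y, z) ∂(gaussianReal 0 1)) (Z ω) ∂P :=
            lintegral_map hgm hZm
        _ ≤ ∫⁻ ω, ENNReal.ofReal (Real.sqrt (((u:ℝ)+1)/u))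
              * ENNReal.ofReal (Real.exp (Q u ω / (2 * B * u))) ∂P :=
            lintegral_mono_ae hae
        _ = ENNReal.ofReal (Real.sqrt (((u:ℝ)+1)/u))
              * ∫⁻ ω, ENNReal.ofReal (Real.exp (Q u ω / (2 * B * u))) ∂P :=
            lintegral_const_mul _ (by
              exact ENNReal.measurable_ofReal.comp
                (Real.measurable_exp.comp ((hQmeas u huT).div_const _)))
        _ ≤ ENNReal.ofReal (Real.sqrt (((u:ℝ)+1)/u)) * ENNReal.ofReal (Real.sqrt u) :=
            mul_le_mul_right (ih huT) _
        _ = ENNReal.ofReal (Real.sqrt (((u+1 : ℕ) : ℝ))) := by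
            rw [← ENNReal.ofReal_mul (Real.sqrt_nonneg _), ← Real.sqrt_mul
              (by positivity : (0:ℝ) ≤ ((u:ℝ)+1)/u)]
            congr 2
            push_cast
            field_simp
  -- Markov / Chernoff step
  have hTR : (2:ℝ) ≤ (T:ℝ) := by exact_mod_cast hT
  have hkey := key T (by omega) le_rfl
  set c : ENNReal := ENNReal.ofReal (Real.exp (s ^ 2 / (2 * B * T))) with hcdef
  have hc0 : c ≠ 0 := by
    rw [hcdef]
    simp [ENNReal.ofReal_eq_zero, not_le, Real.exp_pos]
  have hctop : c ≠ ⊤ := ENNReal.ofReal_ne_top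
  have hsubset : {ω | s ≤ Real.sqrt (∑ i : Fin n, ∑ j : Fin m,
        (∑ t ∈ Finset.Icc 2 T, ε t ω * x t ω i * a t ω j) ^ 2)}
      ⊆ {ω | c ≤ ENNReal.ofReal (Real.exp (Q T ω / (2 * B * T)))} := by
    intro ω hω
    have hω' : s ≤ Real.sqrt (Q T ω) := hω
    have hQ0 : 0 ≤ Q T ω := hQnonneg T ω
    have hs2 : s ^ 2 ≤ Q T ω := by
      have := mul_le_mul hω' hω' hs.le (Real.sqrt_nonneg _)
      rw [Real.mul_self_sqrt hQ0] at this
      nlinarith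
    rw [hcdef]
    apply ENNReal.ofReal_le_ofReal
    apply Real.exp_le_exp.mpr
    have hden : (0:ℝ) < 2 * B * T := by positivity
    exact (div_le_div_iff_of_pos_right hden).mpr hs2
  have hfT : Measurable fun ω => ENNReal.ofReal (Real.exp (Q T ω / (2 * B * T))) :=
    ENNReal.measurable_ofReal.comp (Real.measurable_exp.comp ((hQmeas T le_rfl).div_const _))
  have hmarkov := mul_meas_ge_le_lintegral₀ (μ := P) hfT.aemeasurable c
  have h1 : P {ω | s ≤ Real.sqrt (Q T ω)}
      ≤ P {ω | c ≤ ENNReal.ofReal (Real.exp (Q T ω / (2 * B * T)))} :=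
    measure_mono hsubset
  have h2 : c * P {ω | s ≤ Real.sqrt (Q T ω)} ≤ ENNReal.ofReal (Real.sqrt T) :=
    le_trans (mul_le_mul_right h1 c) (le_trans hmarkov hkey)
  have h3 : P {ω | s ≤ Real.sqrt (Q T ω)} ≤ ENNReal.ofReal (Real.sqrt T) / c := by
    rw [ENNReal.le_div_iff_mul_le (Or.inl hc0) (Or.inl hctop)]
    rwa [mul_comm]
  refine le_trans h3 ?_
  rw [hcdef, ← ENNReal.ofReal_div_of_pos (Real.exp_pos _)]
  apply ENNReal.ofReal_le_ofReal
  rw [div_eq_mul_inv, ← Real.exp_neg]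
  have hsT : Real.sqrt (T:ℝ) ≤ (T:ℝ) := (Real.sqrt_le_left (by linarith)).mpr (by nlinarith)
  have hexpeq : -(s^2/(2*B*(T:ℝ))) = -s^2/(2*(T:ℝ)*B) := by ring
  rw [hexpeq]
  exact mul_le_mul_of_nonneg_right hsT (Real.exp_pos _).le

end
end
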